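/- arXiv:2402.08332 — 3 statements merged into one kernel-verified Lean document; each statement's English description precedes it below -/
import Mathlib

section
/- If G is a graph, I = {a1, a2, a3} is an independent set of size 3 in G, and C is a connected component of G − I such that every vertex of I has a neighbor in C, then G[N[C]] contains an induced subgraph H belonging to the class S ∪ T ∪ M whose set of extremities is exactly I. -/
open SimpleGraph

universe u v

section Defs

variable {V : Type u}

/-- An induced minor model of `H` in `G`. -/
def InducedMinorModel {W : Type v} (H : SimpleGraph W) (G : SimpleGraph V)
    (X : W → Set V) : Prop :=
  (∀ w, (X w).Nonempty) ∧ (∀ w, (G.induce (X w)).Connected) ∧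
  (Pairwise fun w w' => Disjoint (X w) (X w')) ∧
  (Pairwise fun w w' => ((∃ x ∈ X w, ∃ y ∈ X w', G.Adj x y) ↔ H.Adj w w'))

/-- `G` contains `H` as an induced minor. -/
def HasInducedMinor {W : Type v} (H : SimpleGraph W) (G : SimpleGraph V) : Prop :=
  ∃ X : W → Set V, InducedMinorModel H G X

/-- The complete bipartite graph `K_{2,3}`. -/
def K23 : SimpleGraph (Fin 2 ⊕ Fin 3) := completeBipartiteGraph (Fin 2) (Fin 3)

/-- `G` (as a whole graph) is a long prism. -/
def IsLongPrism (G : SimpleGraph V) : Prop :=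
  ∃ (a₁ a₂ a₃ b₁ b₂ b₃ : V) (P₁ : G.Walk a₁ b₁) (P₂ : G.Walk a₂ b₂) (P₃ : G.Walk a₃ b₃),
    P₁.IsPath ∧ P₂.IsPath ∧ P₃.IsPath ∧
    1 ≤ P₁.length ∧ 1 ≤ P₂.length ∧ 1 ≤ P₃.length ∧
    (2 ≤ P₁.length ∨ 2 ≤ P₂.length ∨ 2 ≤ P₃.length) ∧
    (∀ x : V, x ∈ P₁.support ∨ x ∈ P₂.support ∨ x ∈ P₃.support) ∧
    (∀ x : V, x ∈ P₁.support → x ∉ P₂.support) ∧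
    (∀ x : V, x ∈ P₁.support → x ∉ P₃.support) ∧
    (∀ x : V, x ∈ P₂.support → x ∉ P₃.support) ∧
    (∀ x y : V, G.Adj x y ↔ (s(x, y) ∈ P₁.edges ∨ s(x, y) ∈ P₂.edges ∨ s(x, y) ∈ P₃.edges ∨
      s(x, y) ∈ ({s(a₁, a₂), s(a₂, a₃), s(a₁, a₃), s(b₁, b₂), s(b₂, b₃), s(b₁, b₃)} :
        Set (Sym2 V))))

/-- `G` (as a whole graph) is a pyramid. -/
def IsPyramid (G : SimpleGraph V) : Prop :=
  ∃ (a b₁ b₂ b₃ : V) (P₁ : G.Walk a b₁) (P₂ : G.Walk a b₂) (P₃ : G.Walk a b₃),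
    P₁.IsPath ∧ P₂.IsPath ∧ P₃.IsPath ∧
    1 ≤ P₁.length ∧ 1 ≤ P₂.length ∧ 1 ≤ P₃.length ∧
    ((2 ≤ P₁.length ∧ 2 ≤ P₂.length) ∨ (2 ≤ P₁.length ∧ 2 ≤ P₃.length) ∨
      (2 ≤ P₂.length ∧ 2 ≤ P₃.length)) ∧
    (∀ x : V, x ∈ P₁.support ∨ x ∈ P₂.support ∨ x ∈ P₃.support) ∧
    (∀ x : V, x ∈ P₁.support → x ∈ P₂.support → x = a) ∧
    (∀ x : V, x ∈ P₁.support → x ∈ P₃.support → x = a) ∧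
    (∀ x : V, x ∈ P₂.support → x ∈ P₃.support → x = a) ∧
    (∀ x y : V, G.Adj x y ↔ (s(x, y) ∈ P₁.edges ∨ s(x, y) ∈ P₂.edges ∨ s(x, y) ∈ P₃.edges ∨
      s(x, y) ∈ ({s(b₁, b₂), s(b₂, b₃), s(b₁, b₃)} : Set (Sym2 V))))

/-- `G` (as a whole graph) is a theta. -/
def IsTheta (G : SimpleGraph V) : Prop :=
  ∃ (a b : V) (P₁ : G.Walk a b) (P₂ : G.Walk a b) (P₃ : G.Walk a b),
    P₁.IsPath ∧ P₂.IsPath ∧ P₃.IsPath ∧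
    2 ≤ P₁.length ∧ 2 ≤ P₂.length ∧ 2 ≤ P₃.length ∧
    (∀ x : V, x ∈ P₁.support ∨ x ∈ P₂.support ∨ x ∈ P₃.support) ∧
    (∀ x : V, x ∈ P₁.support → x ∈ P₂.support → x = a ∨ x = b) ∧
    (∀ x : V, x ∈ P₁.support → x ∈ P₃.support → x = a ∨ x = b) ∧
    (∀ x : V, x ∈ P₂.support → x ∈ P₃.support → x = a ∨ x = b) ∧
    (∀ x y : V, G.Adj x y ↔ (s(x, y) ∈ P₁.edges ∨ s(x, y) ∈ P₂.edges ∨ s(x, y) ∈ P₃.edges))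

/-- `G` (as a whole graph) is the cube. -/
def IsCube (G : SimpleGraph V) : Prop :=
  ∃ v₁ v₂ v₃ v₄ v₅ v₆ x y : V,
    [v₁, v₂, v₃, v₄, v₅, v₆, x, y].Nodup ∧
    (∀ u : V, u ∈ [v₁, v₂, v₃, v₄, v₅, v₆, x, y]) ∧
    (∀ u w : V, G.Adj u w ↔
      s(u, w) ∈ ({s(v₁, v₂), s(v₂, v₃), s(v₃, v₄), s(v₄, v₅), s(v₅, v₆), s(v₆, v₁),
        s(x, v₁), s(x, v₃), s(x, v₅), s(y, v₂), s(y, v₄), s(y, v₆)} : Set (Sym2 V)))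

/-- `Q` is a sector of the wheel with rim `C` and center `x`. -/
def IsSectorOf (G : SimpleGraph V) (x : V) {w : V} (C : G.Walk w w)
    {p q : V} (Q : G.Walk p q) : Prop :=
  Q.IsPath ∧ 1 ≤ Q.length ∧ (∀ e ∈ Q.edges, e ∈ C.edges) ∧ G.Adj x p ∧ G.Adj x q ∧
  (∀ u ∈ Q.support, u ≠ p → u ≠ q → ¬ G.Adj x u)

/-- The closed walk `C` together with the vertex `x` form a wheel in `G`,
i.e. `C` is a hole (a chordless cycle of length at least 4) and `x` has at least
three neighbors on `C`. -/
def IsWheelWith (G : SimpleGraph V) (x : V) {w : V} (C : G.Walk w w) : Prop :=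
  C.IsCycle ∧ 4 ≤ C.length ∧ x ∉ C.support ∧
  (∀ y z : V, y ∈ C.support → z ∈ C.support → (G.Adj y z ↔ s(y, z) ∈ C.edges)) ∧
  (∃ n₁ n₂ n₃ : V, n₁ ∈ C.support ∧ n₂ ∈ C.support ∧ n₃ ∈ C.support ∧
    n₁ ≠ n₂ ∧ n₁ ≠ n₃ ∧ n₂ ≠ n₃ ∧ G.Adj x n₁ ∧ G.Adj x n₂ ∧ G.Adj x n₃)

/-- `G` (as a whole graph) is a broken wheel: a wheel at least two of whose
sectors have length at least 2. -/
def IsBrokenWheel (G : SimpleGraph V) : Prop :=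
  ∃ (x w : V) (C : G.Walk w w), IsWheelWith G x C ∧
    (∀ u : V, u = x ∨ u ∈ C.support) ∧
    ∃ (p₁ q₁ p₂ q₂ : V) (Q₁ : G.Walk p₁ q₁) (Q₂ : G.Walk p₂ q₂),
      IsSectorOf G x C Q₁ ∧ IsSectorOf G x C Q₂ ∧
      2 ≤ Q₁.length ∧ 2 ≤ Q₂.length ∧ (∀ e ∈ Q₁.edges, e ∉ Q₂.edges)

/-- `G` (as a whole graph) belongs to the class `S` (subdivisions of `K_{1,3}`),
with extremities `e₁`, `e₂`, `e₃`. -/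
def IsS (G : SimpleGraph V) (e₁ e₂ e₃ : V) : Prop :=
  ∃ (u : V) (P₁ : G.Walk u e₁) (P₂ : G.Walk u e₂) (P₃ : G.Walk u e₃),
    P₁.IsPath ∧ P₂.IsPath ∧ P₃.IsPath ∧
    1 ≤ P₁.length ∧ 1 ≤ P₂.length ∧ 1 ≤ P₃.length ∧
    (∀ x : V, x ∈ P₁.support ∨ x ∈ P₂.support ∨ x ∈ P₃.support) ∧
    (∀ x : V, x ∈ P₁.support → x ∈ P₂.support → x = u) ∧
    (∀ x : V, x ∈ P₁.support → x ∈ P₃.support → x = u) ∧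
    (∀ x : V, x ∈ P₂.support → x ∈ P₃.support → x = u) ∧
    (∀ x y : V, G.Adj x y ↔ (s(x, y) ∈ P₁.edges ∨ s(x, y) ∈ P₂.edges ∨ s(x, y) ∈ P₃.edges))

/-- `G` (as a whole graph) belongs to the class `T`, with extremities `e₁`, `e₂`, `e₃`. -/
def IsT (G : SimpleGraph V) (e₁ e₂ e₃ : V) : Prop :=
  ∃ (t₁ t₂ t₃ : V) (P₁ : G.Walk t₁ e₁) (P₂ : G.Walk t₂ e₂) (P₃ : G.Walk t₃ e₃),
    P₁.IsPath ∧ P₂.IsPath ∧ P₃.IsPath ∧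
    1 ≤ P₁.length ∧ 1 ≤ P₂.length ∧ 1 ≤ P₃.length ∧
    (∀ x : V, x ∈ P₁.support ∨ x ∈ P₂.support ∨ x ∈ P₃.support) ∧
    (∀ x : V, x ∈ P₁.support → x ∉ P₂.support) ∧
    (∀ x : V, x ∈ P₁.support → x ∉ P₃.support) ∧
    (∀ x : V, x ∈ P₂.support → x ∉ P₃.support) ∧
    (∀ x y : V, G.Adj x y ↔ (s(x, y) ∈ P₁.edges ∨ s(x, y) ∈ P₂.edges ∨ s(x, y) ∈ P₃.edges ∨
      s(x, y) ∈ ({s(t₁, t₂), s(t₂, t₃), s(t₁, t₃)} : Set (Sym2 V))))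

/-- `G` (as a whole graph) belongs to the class `M`, with extremities the two
endpoints `e₁`, `e₂` of the path and the center `e₃`. -/
def IsM (G : SimpleGraph V) (e₁ e₂ e₃ : V) : Prop :=
  ∃ P : G.Walk e₁ e₂,
    P.IsPath ∧ e₃ ∉ P.support ∧
    (∀ x : V, x = e₃ ∨ x ∈ P.support) ∧
    (∀ x y : V, x ∈ P.support → y ∈ P.support → (G.Adj x y ↔ s(x, y) ∈ P.edges)) ∧
    ¬ G.Adj e₃ e₁ ∧ ¬ G.Adj e₃ e₂ ∧
    (∃ u w : V, u ∈ P.support ∧ w ∈ P.support ∧ u ≠ w ∧ G.Adj e₃ u ∧ G.Adj e₃ w)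

/-- `G` belongs to `S ∪ T ∪ M` and its set of extremities is exactly `I`. -/
def IsSTMwithExtremities (G : SimpleGraph V) (I : Set V) : Prop :=
  ∃ e₁ e₂ e₃ : V, I = {e₁, e₂, e₃} ∧
    (IsS G e₁ e₂ e₃ ∨ IsT G e₁ e₂ e₃ ∨ IsM G e₁ e₂ e₃)

/-- The interior of a path (its support minus the two endpoints). -/
def walkInterior {G : SimpleGraph V} {p q : V} (W : G.Walk p q) : Set V :=
  {v | v ∈ W.support ∧ v ≠ p ∧ v ≠ q}

/-- A broken wheel in `G` together with a frame: the rim is the concatenation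
`P ++ Q ++ R ++ S` where `P = a…b` and `R = c…d` are sectors of length at least 2
(`a`, `b`, `c`, `d` in clockwise order). -/
structure BWFrame (G : SimpleGraph V) where
  x : V
  a : V
  b : V
  c : V
  d : V
  P : G.Walk a b
  Q : G.Walk b c
  R : G.Walk c d
  S : G.Walk d a
  hP : 2 ≤ P.length
  hR : 2 ≤ R.length
  nondeg : ¬ (b = c ∧ d = a)
  cyc : (((P.append Q).append R).append S).IsCycle
  len4 : 4 ≤ (((P.append Q).append R).append S).length
  hx : x ∉ (((P.append Q).append R).append S).support
  chordless : ∀ y z : V, y ∈ (((P.append Q).append R).append S).support →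
    z ∈ (((P.append Q).append R).append S).support →
    (G.Adj y z ↔ s(y, z) ∈ (((P.append Q).append R).append S).edges)
  adja : G.Adj x a
  adjb : G.Adj x b
  adjc : G.Adj x c
  adjd : G.Adj x d
  secP : ∀ u ∈ P.support, u ≠ a → u ≠ b → ¬ G.Adj x u
  secR : ∀ u ∈ R.support, u ≠ c → u ≠ d → ¬ G.Adj x u

/-- The rim of a framed broken wheel. -/
def BWFrame.rim {G : SimpleGraph V} (F : BWFrame G) : G.Walk F.a F.a :=
  ((F.P.append F.Q).append F.R).append F.S

/-- The vertex set of a framed broken wheel. -/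
def BWFrame.verts {G : SimpleGraph V} (F : BWFrame G) : Set V :=
  insert F.x {v | v ∈ F.rim.support}

/-- Optimality of a framed broken wheel `(W, F)`: no broken wheel of `G` has fewer
vertices, and subject to that the sum of the lengths of `Q` and `S` is minimal. -/
def BWFrame.Optimal {G : SimpleGraph V} (F : BWFrame G) : Prop :=
  (∀ T : Set V, IsBrokenWheel (G.induce T) → F.verts.ncard ≤ T.ncard) ∧
  (∀ F' : BWFrame G, F'.verts.ncard = F.verts.ncard →
    F.Q.length + F.S.length ≤ F'.Q.length + F'.S.length)

/-- `S` separates `u` and `v` in `G`: both avoid `S` and every walk between them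
meets `S`. -/
def Separates (G : SimpleGraph V) (S : Set V) (u v : V) : Prop :=
  u ∉ S ∧ v ∉ S ∧ ∀ p : G.Walk u v, ∃ w ∈ p.support, w ∈ S

/-- `S` is a minimal separator of `G`: a minimal `u,v`-separator for some `u`, `v`. -/
def IsMinimalSeparator (G : SimpleGraph V) (S : Set V) : Prop :=
  ∃ u v : V, Separates G S u v ∧ ∀ T ⊆ S, Separates G T u v → T = S

/-- `A` is an independent set of `G`. -/
def IsIndepSet (G : SimpleGraph V) (A : Set V) : Prop :=
  ∀ x ∈ A, ∀ y ∈ A, x ≠ y → ¬ G.Adj x y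

end Defs
section STMInfra
variable {V : Type u}
namespace STMProof

variable {G : SimpleGraph V}


/-- Transfer a walk with support in `S` to the induced subgraph on `S`. -/
def toInduce {S : Set V} : ∀ {u v : V} (p : G.Walk u v)
    (h : ∀ x ∈ p.support, x ∈ S),
    (G.induce S).Walk ⟨u, h u p.start_mem_support⟩ ⟨v, h v p.end_mem_support⟩
  | _, _, SimpleGraph.Walk.nil, _ => SimpleGraph.Walk.nil
  | u, v, SimpleGraph.Walk.cons ha p, h =>
    SimpleGraph.Walk.cons (by exact ha)
      (toInduce p (fun x hx => h x (by simp [hx])))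

lemma support_toInduce {S : Set V} : ∀ {u v : V} (p : G.Walk u v)
    (h : ∀ x ∈ p.support, x ∈ S),
    (toInduce p h).support.map Subtype.val = p.support
  | _, _, SimpleGraph.Walk.nil, _ => by simp [toInduce]
  | u, v, SimpleGraph.Walk.cons ha p, h => by
      exact congrArg (fun l => u :: l) (support_toInduce p _)

lemma edges_toInduce {S : Set V} : ∀ {u v : V} (p : G.Walk u v)
    (h : ∀ x ∈ p.support, x ∈ S),
    (toInduce p h).edges.map (Sym2.map Subtype.val) = p.edges
  | _, _, SimpleGraph.Walk.nil, _ => by simp [toInduce]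
  | u, v, SimpleGraph.Walk.cons ha p, h => by
      exact congrArg (fun l => s(u, _) :: l) (edges_toInduce p _)

lemma length_toInduce {S : Set V} : ∀ {u v : V} (p : G.Walk u v)
    (h : ∀ x ∈ p.support, x ∈ S), (toInduce p h).length = p.length
  | _, _, SimpleGraph.Walk.nil, _ => by simp [toInduce]
  | u, v, SimpleGraph.Walk.cons ha p, h => by
      exact congrArg (fun n => n + 1) (length_toInduce p _)

lemma mem_support_toInduce {S : Set V} {u v : V} (p : G.Walk u v)
    (h : ∀ x ∈ p.support, x ∈ S) (x : S) :
    x ∈ (toInduce p h).support ↔ (x : V) ∈ p.support := by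
  rw [← support_toInduce p h]
  constructor
  · exact fun hx => List.mem_map_of_mem hx
  · intro hx
    rcases List.mem_map.1 hx with ⟨y, hy, hyx⟩
    rwa [Subtype.val_injective hyx] at hy

lemma mem_edges_toInduce {S : Set V} {u v : V} (p : G.Walk u v)
    (h : ∀ x ∈ p.support, x ∈ S) (x y : S) :
    s(x, y) ∈ (toInduce p h).edges ↔ s((x : V), (y : V)) ∈ p.edges := by
  rw [← edges_toInduce p h]
  constructor
  · intro hx
    have := List.mem_map_of_mem (f := Sym2.map Subtype.val) hx
    simpa using this
  · intro hx
    rcases List.mem_map.1 hx with ⟨e, he, hex⟩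
    have : e = s(x, y) := by
      apply Sym2.map.injective Subtype.val_injective
      simpa using hex
    rwa [this] at he

lemma isPath_toInduce {S : Set V} {u v : V} (p : G.Walk u v)
    (h : ∀ x ∈ p.support, x ∈ S) (hp : p.IsPath) : (toInduce p h).IsPath := by
  rw [SimpleGraph.Walk.isPath_def]
  have := hp.support_nodup
  rw [← support_toInduce p h] at this
  exact this.of_map _

/-- Map a walk in an induced subgraph back to the ambient graph. -/
def ofInduce {S : Set V} : ∀ {u v : S} (p : (G.induce S).Walk u v), G.Walk u.val v.val
  | _, _, SimpleGraph.Walk.nil => SimpleGraph.Walk.nil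
  | _, _, SimpleGraph.Walk.cons ha p => SimpleGraph.Walk.cons ha (ofInduce p)

lemma support_ofInduce {S : Set V} : ∀ {u v : S} (p : (G.induce S).Walk u v),
    (ofInduce p).support = p.support.map Subtype.val
  | _, _, SimpleGraph.Walk.nil => by simp [ofInduce]
  | _, _, SimpleGraph.Walk.cons ha p => by
    exact congrArg (fun l => _ :: l) (support_ofInduce p)



/-- Split a walk at the first vertex satisfying a predicate. -/
lemma splitFirst {u v : V} (p : G.Walk u v) (Pred : V → Prop)
    (h : ∃ x ∈ p.support, Pred x) :
    ∃ (c : V) (q : G.Walk u c) (r : G.Walk c v),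
      p = q.append r ∧ Pred c ∧ ∀ x ∈ q.support, x ≠ c → ¬ Pred x := by
  induction p with
  | nil =>
    refine ⟨_, SimpleGraph.Walk.nil, SimpleGraph.Walk.nil, by simp, by simpa using h, ?_⟩
    intro x hx hne; simp at hx; exact absurd hx hne
  | @cons a b c ha p ih =>
    by_cases hPa : Pred a
    · exact ⟨a, SimpleGraph.Walk.nil, SimpleGraph.Walk.cons ha p, by simp, hPa,
        by intro x hx hne; simp at hx; exact absurd hx hne⟩
    · have h' : ∃ x ∈ p.support, Pred x := by
        rcases h with ⟨x, hx, hPx⟩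
        refine ⟨x, ?_, hPx⟩
        rcases (SimpleGraph.Walk.mem_support_iff _).1 hx with rfl | hx'
        · exact absurd hPx hPa
        · simpa using hx'
      rcases ih h' with ⟨d, q, r, heq, hPd, hq⟩
      refine ⟨d, SimpleGraph.Walk.cons ha q, r, by simp [heq], hPd, ?_⟩
      intro x hx hne
      rcases (SimpleGraph.Walk.mem_support_iff _).1 hx with rfl | hx'
      · exact hPa
      · exact hq x (by simpa using hx') hne

lemma walk_length_one_edge {u v : V} (p : G.Walk u v) (h : p.length = 1) :
    s(u, v) ∈ p.edges := by
  cases p with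
  | nil => simp at h
  | cons ha q =>
    cases q with
    | nil => simp
    | cons hb r => simp [SimpleGraph.Walk.length_cons] at h

lemma nil_of_isPath_loop {u : V} (p : G.Walk u u) (h : p.IsPath) : p.length = 0 := by
  cases p with
  | nil => rfl
  | cons ha q =>
    exfalso
    have := h.support_nodup
    rw [SimpleGraph.Walk.support_cons] at this
    exact (List.nodup_cons.1 this).1 q.end_mem_support

/-- Existence of a minimal-length walk from `a` to a target set `A`, with support
constrained to `S`. -/
lemma exists_min_walk (a : V) (S A : Set V)
    (hex : ∃ (v : V) (p : G.Walk a v), v ∈ A ∧ ∀ x ∈ p.support, x ∈ S) :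
    ∃ (v : V) (p : G.Walk a v), v ∈ A ∧ (∀ x ∈ p.support, x ∈ S) ∧ p.IsPath ∧
      ∀ (w : V) (q : G.Walk a w), w ∈ A → (∀ x ∈ q.support, x ∈ S) →
        p.length ≤ q.length := by
  classical
  let lens : Set ℕ := {n | ∃ (v : V) (p : G.Walk a v), v ∈ A ∧ (∀ x ∈ p.support, x ∈ S)
    ∧ p.length = n}
  have hne : lens.Nonempty := by
    rcases hex with ⟨v, p, hv, hp⟩
    exact ⟨p.length, v, p, hv, hp, rfl⟩
  have hmem := Nat.sInf_mem hne
  rcases hmem with ⟨v, p, hv, hp, hlen⟩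
  refine ⟨v, p.bypass, hv, ?_, p.bypass_isPath, ?_⟩
  · intro x hx; exact hp x (p.support_bypass_subset hx)
  · intro w q hw hq
    have h1 : p.bypass.length ≤ p.length := p.length_bypass_le
    have h2 : p.length ≤ q.length := by
      rw [hlen]
      exact Nat.sInf_le ⟨w, q, hw, hq, rfl⟩
    omega

private lemma chord_aux {a v x y : V} (p : G.Walk a v) (S A : Set V) (hv : v ∈ A)
    (hS : ∀ z ∈ p.support, z ∈ S)
    (hmin : ∀ (w : V) (q : G.Walk a w), w ∈ A → (∀ z ∈ q.support, z ∈ S) →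
      p.length ≤ q.length)
    (hadj : G.Adj x y) (q : G.Walk a x) (r : G.Walk x v) (heq : p = q.append r)
    (hy : y ∈ p.support) : s(x, y) ∈ p.edges ∨ y ∈ q.support := by
  by_cases hyq : y ∈ q.support
  · exact Or.inr hyq
  left
  have hxy : x ≠ y := hadj.ne
  have hyr : y ∈ r.support := by
    rw [heq] at hy
    rcases (SimpleGraph.Walk.mem_support_append_iff _ _).1 hy with h1 | h2
    · exact absurd h1 hyq
    · exact h2
  rcases splitFirst r (fun z => z = y) ⟨y, hyr, rfl⟩ with ⟨c, r1, r2, heqr, hc, _⟩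
  subst hc
  have hsupp : ∀ z ∈ (q.append (SimpleGraph.Walk.cons hadj r2)).support, z ∈ S := by
    intro z hz
    rcases (SimpleGraph.Walk.mem_support_append_iff _ _).1 hz with h1 | h2
    · refine hS z ?_
      rw [heq]
      exact (SimpleGraph.Walk.mem_support_append_iff _ _).2 (Or.inl h1)
    · rw [SimpleGraph.Walk.support_cons] at h2
      rcases List.mem_cons.1 h2 with rfl | h3
      · refine hS z ?_
        rw [heq]
        exact (SimpleGraph.Walk.mem_support_append_iff _ _).2 (Or.inl q.end_mem_support)
      · refine hS z ?_
        rw [heq, heqr]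
        refine (SimpleGraph.Walk.mem_support_append_iff _ _).2 (Or.inr ?_)
        exact (SimpleGraph.Walk.mem_support_append_iff _ _).2 (Or.inr h3)
  have hlen := hmin v (q.append (SimpleGraph.Walk.cons hadj r2)) hv hsupp
  rw [heq, heqr] at hlen
  simp only [SimpleGraph.Walk.length_append, SimpleGraph.Walk.length_cons] at hlen
  have hr1 : r1.length = 1 := by
    have h0 : r1.length ≠ 0 := fun h => hxy (SimpleGraph.Walk.eq_of_length_eq_zero h)
    omega
  have := walk_length_one_edge r1 hr1
  rw [heq, heqr]
  rw [SimpleGraph.Walk.edges_append, SimpleGraph.Walk.edges_append]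
  simp only [List.mem_append]
  exact Or.inr (Or.inl this)

/-- A minimal constrained walk to a set is chordless (within its support). -/
lemma min_walk_chordless {a v : V} (p : G.Walk a v) (S A : Set V) (hv : v ∈ A)
    (hS : ∀ z ∈ p.support, z ∈ S)
    (hmin : ∀ (w : V) (q : G.Walk a w), w ∈ A → (∀ z ∈ q.support, z ∈ S) →
      p.length ≤ q.length)
    {x y : V} (hx : x ∈ p.support) (hy : y ∈ p.support) (hadj : G.Adj x y) :
    s(x, y) ∈ p.edges := by
  rcases splitFirst p (fun z => z = x ∨ z = y) ⟨x, hx, Or.inl rfl⟩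
    with ⟨c, q, r, heq, hc, hq⟩
  rcases hc with rfl | rfl
  · rcases chord_aux p S A hv hS hmin hadj q r heq hy with h | h
    · exact h
    · exact absurd (Or.inr rfl) (hq y h (Ne.symm hadj.ne))
  · rcases chord_aux p S A hv hS hmin hadj.symm q r heq hx with h | h
    · rwa [Sym2.eq_swap] at h
    · exact absurd (Or.inl rfl) (hq x h hadj.ne)

/-- In a minimal constrained walk to `A`, no internal vertex lies in `A`. -/
lemma min_walk_first_hit {a v : V} (p : G.Walk a v) (S A : Set V)
    (hS : ∀ z ∈ p.support, z ∈ S)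
    (hmin : ∀ (w : V) (q : G.Walk a w), w ∈ A → (∀ z ∈ q.support, z ∈ S) →
      p.length ≤ q.length)
    {x : V} (hx : x ∈ p.support) (hxA : x ∈ A) : x = v := by
  rcases splitFirst p (fun z => z = x) ⟨x, hx, rfl⟩ with ⟨c, q, r, heq, rfl, _⟩
  have hlen := hmin c q hxA (fun z hz => hS z (by
    rw [heq]; exact (SimpleGraph.Walk.mem_support_append_iff _ _).2 (Or.inl hz)))
  rw [heq, SimpleGraph.Walk.length_append] at hlen
  have : r.length = 0 := by omega
  exact (SimpleGraph.Walk.eq_of_length_eq_zero this)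

/-- Supports of the two parts of a path intersect only in the junction. -/
lemma path_append_inter {a b c : V} {X : G.Walk a b} {Y : G.Walk b c}
    (h : (X.append Y).IsPath) {x : V} (hx : x ∈ X.support) (hy : x ∈ Y.support) :
    x = b := by
  have hnd := h.support_nodup
  rw [SimpleGraph.Walk.support_append] at hnd
  by_contra hne
  have hyt : x ∈ Y.support.tail := by
    rw [Y.support_eq_cons] at hy
    rcases List.mem_cons.1 hy with rfl | h2
    · exact absurd rfl hne
    · exact h2
  exact (List.disjoint_of_nodup_append hnd) hx hyt

/-- Localize an edge of a path to the part of the path containing both endpoints. -/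
lemma edge_in_right {a b c : V} {X : G.Walk a b} {Y : G.Walk b c}
    (h : (X.append Y).IsPath) {x y : V} (he : s(x, y) ∈ (X.append Y).edges)
    (hx : x ∈ Y.support) (hy : y ∈ Y.support) : s(x, y) ∈ Y.edges := by
  rw [SimpleGraph.Walk.edges_append, List.mem_append] at he
  rcases he with h1 | h2
  · exfalso
    have hx' : x ∈ X.support := X.fst_mem_support_of_mem_edges h1
    have hy' : y ∈ X.support := X.snd_mem_support_of_mem_edges h1
    have e1 := path_append_inter h hx' hx
    have e2 := path_append_inter h hy' hy
    have : G.Adj x y := SimpleGraph.Walk.adj_of_mem_edges _ h1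
    rw [e1, e2] at this
    exact this.ne rfl
  · exact h2

lemma edge_in_left {a b c : V} {X : G.Walk a b} {Y : G.Walk b c}
    (h : (X.append Y).IsPath) {x y : V} (he : s(x, y) ∈ (X.append Y).edges)
    (hx : x ∈ X.support) (hy : y ∈ X.support) : s(x, y) ∈ X.edges := by
  rw [SimpleGraph.Walk.edges_append, List.mem_append] at he
  rcases he with h1 | h2
  · exact h1
  · exfalso
    have hx' : x ∈ Y.support := Y.fst_mem_support_of_mem_edges h2
    have hy' : y ∈ Y.support := Y.snd_mem_support_of_mem_edges h2
    have e1 := path_append_inter h hx hx'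
    have e2 := path_append_inter h hy hy'
    have : G.Adj x y := SimpleGraph.Walk.adj_of_mem_edges _ h2
    rw [e1, e2] at this
    exact this.ne rfl

/-- Criterion for an append of two paths being a path. -/
lemma isPath_append {a b c : V} {X : G.Walk a b} {Y : G.Walk b c}
    (hX : X.IsPath) (hY : Y.IsPath)
    (hint : ∀ x ∈ X.support, x ∈ Y.support → x = b) : (X.append Y).IsPath := by
  rw [SimpleGraph.Walk.isPath_def, SimpleGraph.Walk.support_append]
  rw [List.nodup_append]
  refine ⟨hX.support_nodup, hY.support_nodup.tail, ?_⟩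
  intro x hx x' hxt hxx
  subst hxx
  have hxy : x ∈ Y.support := List.mem_of_mem_tail hxt
  have hb : x = b := hint x hx hxy
  subst hb
  have := hY.support_nodup
  rw [Y.support_eq_cons, List.nodup_cons] at this
  exact this.1 hxt


lemma mkS {u e1 e2 e3 : V} (Su : Set V)
    (P1 : G.Walk u e1) (P2 : G.Walk u e2) (P3 : G.Walk u e3)
    (h1 : P1.IsPath) (h2 : P2.IsPath) (h3 : P3.IsPath)
    (l1 : 1 ≤ P1.length) (l2 : 1 ≤ P2.length) (l3 : 1 ≤ P3.length)
    (hS : ∀ x, x ∈ Su ↔ (x ∈ P1.support ∨ x ∈ P2.support ∨ x ∈ P3.support))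
    (i12 : ∀ x, x ∈ P1.support → x ∈ P2.support → x = u)
    (i13 : ∀ x, x ∈ P1.support → x ∈ P3.support → x = u)
    (i23 : ∀ x, x ∈ P2.support → x ∈ P3.support → x = u)
    (closed : ∀ x y, x ∈ Su → y ∈ Su → G.Adj x y →
      (s(x,y) ∈ P1.edges ∨ s(x,y) ∈ P2.edges ∨ s(x,y) ∈ P3.edges))
    (he1 : e1 ∈ Su) (he2 : e2 ∈ Su) (he3 : e3 ∈ Su) :
    IsS (G.induce Su) ⟨e1, he1⟩ ⟨e2, he2⟩ ⟨e3, he3⟩ := by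
  have hsub1 : ∀ x ∈ P1.support, x ∈ Su := fun x hx => (hS x).2 (Or.inl hx)
  have hsub2 : ∀ x ∈ P2.support, x ∈ Su := fun x hx => (hS x).2 (Or.inr (Or.inl hx))
  have hsub3 : ∀ x ∈ P3.support, x ∈ Su := fun x hx => (hS x).2 (Or.inr (Or.inr hx))
  refine ⟨⟨u, hsub1 u P1.start_mem_support⟩,
    toInduce P1 hsub1, toInduce P2 hsub2, toInduce P3 hsub3,
    isPath_toInduce _ _ h1, isPath_toInduce _ _ h2, isPath_toInduce _ _ h3,
    by rwa [length_toInduce], by rwa [length_toInduce], by rwa [length_toInduce],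
    ?_, ?_, ?_, ?_, ?_⟩
  · intro x
    rcases (hS x.val).1 x.2 with h | h | h
    · exact Or.inl ((mem_support_toInduce _ _ _).2 h)
    · exact Or.inr (Or.inl ((mem_support_toInduce _ _ _).2 h))
    · exact Or.inr (Or.inr ((mem_support_toInduce _ _ _).2 h))
  · intro x hx hy
    exact Subtype.ext (i12 x.val ((mem_support_toInduce _ _ _).1 hx)
      ((mem_support_toInduce _ _ _).1 hy))
  · intro x hx hy
    exact Subtype.ext (i13 x.val ((mem_support_toInduce _ _ _).1 hx)
      ((mem_support_toInduce _ _ _).1 hy))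
  · intro x hx hy
    exact Subtype.ext (i23 x.val ((mem_support_toInduce _ _ _).1 hx)
      ((mem_support_toInduce _ _ _).1 hy))
  · intro x y
    constructor
    · intro hadj
      have : G.Adj x.val y.val := hadj
      rcases closed x.val y.val x.2 y.2 this with h | h | h
      · exact Or.inl ((mem_edges_toInduce _ _ _ _).2 h)
      · exact Or.inr (Or.inl ((mem_edges_toInduce _ _ _ _).2 h))
      · exact Or.inr (Or.inr ((mem_edges_toInduce _ _ _ _).2 h))
    · intro h
      rcases h with h | h | h <;> exact SimpleGraph.Walk.adj_of_mem_edges _ h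

lemma mkT {t1 t2 t3 e1 e2 e3 : V} (Su : Set V)
    (P1 : G.Walk t1 e1) (P2 : G.Walk t2 e2) (P3 : G.Walk t3 e3)
    (h1 : P1.IsPath) (h2 : P2.IsPath) (h3 : P3.IsPath)
    (l1 : 1 ≤ P1.length) (l2 : 1 ≤ P2.length) (l3 : 1 ≤ P3.length)
    (a12 : G.Adj t1 t2) (a23 : G.Adj t2 t3) (a13 : G.Adj t1 t3)
    (hS : ∀ x, x ∈ Su ↔ (x ∈ P1.support ∨ x ∈ P2.support ∨ x ∈ P3.support))
    (i12 : ∀ x, x ∈ P1.support → x ∉ P2.support)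
    (i13 : ∀ x, x ∈ P1.support → x ∉ P3.support)
    (i23 : ∀ x, x ∈ P2.support → x ∉ P3.support)
    (closed : ∀ x y, x ∈ Su → y ∈ Su → G.Adj x y →
      (s(x,y) ∈ P1.edges ∨ s(x,y) ∈ P2.edges ∨ s(x,y) ∈ P3.edges ∨
        s(x,y) = s(t1,t2) ∨ s(x,y) = s(t2,t3) ∨ s(x,y) = s(t1,t3)))
    (he1 : e1 ∈ Su) (he2 : e2 ∈ Su) (he3 : e3 ∈ Su) :
    IsT (G.induce Su) ⟨e1, he1⟩ ⟨e2, he2⟩ ⟨e3, he3⟩ := by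
  have hsub1 : ∀ x ∈ P1.support, x ∈ Su := fun x hx => (hS x).2 (Or.inl hx)
  have hsub2 : ∀ x ∈ P2.support, x ∈ Su := fun x hx => (hS x).2 (Or.inr (Or.inl hx))
  have hsub3 : ∀ x ∈ P3.support, x ∈ Su := fun x hx => (hS x).2 (Or.inr (Or.inr hx))
  have ht1 : t1 ∈ Su := hsub1 t1 P1.start_mem_support
  have ht2 : t2 ∈ Su := hsub2 t2 P2.start_mem_support
  have ht3 : t3 ∈ Su := hsub3 t3 P3.start_mem_support
  refine ⟨⟨t1, ht1⟩, ⟨t2, ht2⟩, ⟨t3, ht3⟩,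
    toInduce P1 hsub1, toInduce P2 hsub2, toInduce P3 hsub3,
    isPath_toInduce _ _ h1, isPath_toInduce _ _ h2, isPath_toInduce _ _ h3,
    by rwa [length_toInduce], by rwa [length_toInduce], by rwa [length_toInduce],
    ?_, ?_, ?_, ?_, ?_⟩
  · intro x
    rcases (hS x.val).1 x.2 with h | h | h
    · exact Or.inl ((mem_support_toInduce _ _ _).2 h)
    · exact Or.inr (Or.inl ((mem_support_toInduce _ _ _).2 h))
    · exact Or.inr (Or.inr ((mem_support_toInduce _ _ _).2 h))
  · intro x hx hy
    exact i12 x.val ((mem_support_toInduce _ _ _).1 hx) ((mem_support_toInduce _ _ _).1 hy)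
  · intro x hx hy
    exact i13 x.val ((mem_support_toInduce _ _ _).1 hx) ((mem_support_toInduce _ _ _).1 hy)
  · intro x hx hy
    exact i23 x.val ((mem_support_toInduce _ _ _).1 hx) ((mem_support_toInduce _ _ _).1 hy)
  · intro x y
    constructor
    · intro hadj
      have hG : G.Adj x.val y.val := hadj
      rcases closed x.val y.val x.2 y.2 hG with h | h | h | h | h | h
      · exact Or.inl ((mem_edges_toInduce _ _ _ _).2 h)
      · exact Or.inr (Or.inl ((mem_edges_toInduce _ _ _ _).2 h))
      · exact Or.inr (Or.inr (Or.inl ((mem_edges_toInduce _ _ _ _).2 h)))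
      all_goals {
        refine Or.inr (Or.inr (Or.inr ?_))
        rw [Sym2.eq_iff] at h
        simp only [Set.mem_insert_iff, Set.mem_singleton_iff, Sym2.eq_iff]
        rcases h with ⟨hh1, hh2⟩ | ⟨hh1, hh2⟩ <;>
          simp [Subtype.ext_iff, hh1, hh2]
      }
    · intro h
      rcases h with h | h | h | h
      · exact SimpleGraph.Walk.adj_of_mem_edges _ h
      · exact SimpleGraph.Walk.adj_of_mem_edges _ h
      · exact SimpleGraph.Walk.adj_of_mem_edges _ h
      · simp only [Set.mem_insert_iff, Set.mem_singleton_iff, Sym2.eq_iff] at h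
        show G.Adj x.val y.val
        rcases h with (⟨hh1, hh2⟩ | ⟨hh1, hh2⟩) | (⟨hh1, hh2⟩ | ⟨hh1, hh2⟩) |
          (⟨hh1, hh2⟩ | ⟨hh1, hh2⟩) <;>
          rw [Subtype.ext_iff] at hh1 hh2 <;> rw [hh1, hh2]
        · exact a12
        · exact a12.symm
        · exact a23
        · exact a23.symm
        · exact a13
        · exact a13.symm

lemma mkM {e1 e2 e3 : V} (Su : Set V)
    (P : G.Walk e1 e2) (hp : P.IsPath)
    (hS : ∀ x, x ∈ Su ↔ (x ∈ P.support ∨ x = e3))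
    (he3P : e3 ∉ P.support)
    (chord : ∀ x y, x ∈ P.support → y ∈ P.support → (G.Adj x y ↔ s(x,y) ∈ P.edges))
    (n1 : ¬ G.Adj e3 e1) (n2 : ¬ G.Adj e3 e2)
    (hub : ∃ w1 w2, w1 ∈ P.support ∧ w2 ∈ P.support ∧ w1 ≠ w2 ∧
      G.Adj e3 w1 ∧ G.Adj e3 w2)
    (he1 : e1 ∈ Su) (he2 : e2 ∈ Su) (he3 : e3 ∈ Su) :
    IsM (G.induce Su) ⟨e1, he1⟩ ⟨e2, he2⟩ ⟨e3, he3⟩ := by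
  have hsub : ∀ x ∈ P.support, x ∈ Su := fun x hx => (hS x).2 (Or.inl hx)
  refine ⟨toInduce P hsub, isPath_toInduce _ _ hp, ?_, ?_, ?_, n1, n2, ?_⟩
  · intro hc
    exact he3P ((mem_support_toInduce _ _ _).1 hc)
  · intro x
    rcases (hS x.val).1 x.2 with h | h
    · exact Or.inr ((mem_support_toInduce _ _ _).2 h)
    · exact Or.inl (Subtype.ext h)
  · intro x y hx hy
    constructor
    · intro hadj
      exact (mem_edges_toInduce _ _ _ _).2 ((chord x.val y.val
        ((mem_support_toInduce _ _ _).1 hx) ((mem_support_toInduce _ _ _).1 hy)).1 hadj)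
    · intro h
      exact SimpleGraph.Walk.adj_of_mem_edges _ h
  · rcases hub with ⟨w1, w2, hw1, hw2, hne, ha1, ha2⟩
    refine ⟨⟨w1, hsub w1 hw1⟩, ⟨w2, hsub w2 hw2⟩,
      (mem_support_toInduce _ _ _).2 hw1, (mem_support_toInduce _ _ _).2 hw2,
      fun hc => hne (congrArg Subtype.val hc), ha1, ha2⟩

lemma extremEq (Su : Set V) {x y z : V} (hx : x ∈ Su) (hy : y ∈ Su) (hz : z ∈ Su) :
    {v : Su | (v : V) = x ∨ (v : V) = y ∨ (v : V) = z} =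
      ({⟨x,hx⟩, ⟨y,hy⟩, ⟨z,hz⟩} : Set Su) := by
  ext v
  simp [Set.mem_insert_iff, Subtype.ext_iff]

/-- The goal of the main theorem, as a predicate. -/
def Goal (G : SimpleGraph V) (a₁ a₂ a₃ : V) (C : Set V) : Prop :=
  ∃ S : Set V, S ⊆ C ∪ {w | ∃ u ∈ C, G.Adj u w} ∧
      a₁ ∈ S ∧ a₂ ∈ S ∧ a₃ ∈ S ∧
      IsSTMwithExtremities (G.induce S)
        {v : S | (v : V) = a₁ ∨ (v : V) = a₂ ∨ (v : V) = a₃}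

lemma goal_perm {a₁ a₂ a₃ b₁ b₂ b₃ : V} {C : Set V}
    (hperm : ∀ v : V, (v = b₁ ∨ v = b₂ ∨ v = b₃) ↔ (v = a₁ ∨ v = a₂ ∨ v = a₃))
    (h : Goal G b₁ b₂ b₃ C) : Goal G a₁ a₂ a₃ C := by
  rcases h with ⟨S, hsub, h1, h2, h3, hstm⟩
  have hset : {v : S | (v : V) = b₁ ∨ (v : V) = b₂ ∨ (v : V) = b₃} =
      {v : S | (v : V) = a₁ ∨ (v : V) = a₂ ∨ (v : V) = a₃} := by
    ext v; exact hperm v.val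
  refine ⟨S, hsub, ?_, ?_, ?_, hset ▸ hstm⟩
  · rcases (hperm a₁).2 (Or.inl rfl) with rfl | rfl | rfl <;> assumption
  · rcases (hperm a₂).2 (Or.inr (Or.inl rfl)) with rfl | rfl | rfl <;> assumption
  · rcases (hperm a₃).2 (Or.inr (Or.inr rfl)) with rfl | rfl | rfl <;> assumption

lemma one_le_length_of_ne {u v : V} (p : G.Walk u v) (h : u ≠ v) : 1 ≤ p.length :=
  Nat.one_le_iff_ne_zero.2 (fun h0 => h (SimpleGraph.Walk.eq_of_length_eq_zero h0))

/-- The apex lemma: given an induced path `Y` from `x` to `y` (with interior in `C`)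
and an apex vertex with at least one neighbor on `Y`, not adjacent to the endpoints,
we obtain the goal (an `M` or an `S`). -/
lemma apexCase (C : Set V) {x y apex : V}
    (hax : ¬ G.Adj apex x) (hay : ¬ G.Adj apex y)
    (hxNC : ∃ u ∈ C, G.Adj x u) (hyNC : ∃ u ∈ C, G.Adj y u)
    (Y : G.Walk x y) (hY : Y.IsPath)
    (hYsub : ∀ v ∈ Y.support, v = x ∨ v = y ∨ v ∈ C)
    (hchord : ∀ u v, u ∈ Y.support → v ∈ Y.support → G.Adj u v → s(u,v) ∈ Y.edges)
    (hapexY : apex ∉ Y.support)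
    (hnb : ∃ z ∈ Y.support, G.Adj apex z) :
    Goal G x y apex C := by
  classical
  set Su : Set V := {v | v ∈ Y.support ∨ v = apex} with hSu
  rcases hnb with ⟨z, hzY, hz⟩
  have hzC : z ∈ C := by
    rcases hYsub z hzY with rfl | rfl | h
    · exact absurd hz hax
    · exact absurd hz hay
    · exact h
  have hxSu : x ∈ Su := Or.inl Y.start_mem_support
  have hySu : y ∈ Su := Or.inl Y.end_mem_support
  have haSu : apex ∈ Su := Or.inr rfl
  have hsub : Su ⊆ C ∪ {w | ∃ u ∈ C, G.Adj u w} := by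
    intro v hv
    rcases hv with hvY | rfl
    · rcases hYsub v hvY with rfl | rfl | h
      · rcases hxNC with ⟨u, huC, hu⟩
        exact Or.inr ⟨u, huC, hu.symm⟩
      · rcases hyNC with ⟨u, huC, hu⟩
        exact Or.inr ⟨u, huC, hu.symm⟩
      · exact Or.inl h
    · exact Or.inr ⟨z, hzC, hz.symm⟩
  refine ⟨Su, hsub, hxSu, hySu, haSu, ⟨⟨x, hxSu⟩, ⟨y, hySu⟩, ⟨apex, haSu⟩,
    extremEq Su hxSu hySu haSu, ?_⟩⟩
  by_cases htwo : ∃ w ∈ Y.support, G.Adj apex w ∧ w ≠ z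
  · -- two neighbors: an M with center apex
    rcases htwo with ⟨w, hwY, hw, hwz⟩
    refine Or.inr (Or.inr (mkM Su Y hY (fun v => Iff.rfl) hapexY ?_ hax hay
      ⟨w, z, hwY, hzY, hwz, hw, hz⟩ hxSu hySu haSu))
    intro u v hu hv
    exact ⟨hchord u v hu hv, fun h => SimpleGraph.Walk.adj_of_mem_edges _ h⟩
  · -- unique neighbor z: an S with center z
    push_neg at htwo
    have huniq : ∀ w ∈ Y.support, G.Adj apex w → w = z := fun w hw ha => htwo w hw ha
    rcases splitFirst Y (fun v => v = z) ⟨z, hzY, rfl⟩ with ⟨c, D1, D2, heq, hc, _⟩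
    subst hc
    have hYp : (D1.append D2).IsPath := heq ▸ hY
    have hzx : c ≠ x := fun h => hax (h ▸ hz)
    have hzy : c ≠ y := fun h => hay (h ▸ hz)
    have hzapex : c ≠ apex := fun h => hapexY (h ▸ hzY)
    have hazD1 : apex ∉ D1.support := fun hc => hapexY (by
      rw [heq]; exact (SimpleGraph.Walk.mem_support_append_iff _ _).2 (Or.inl hc))
    have hazD2 : apex ∉ D2.support := fun hc => hapexY (by
      rw [heq]; exact (SimpleGraph.Walk.mem_support_append_iff _ _).2 (Or.inr hc))
    have hmemY : ∀ v : V, v ∈ Y.support ↔ (v ∈ D1.support ∨ v ∈ D2.support) := by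
      intro v
      rw [heq]
      exact SimpleGraph.Walk.mem_support_append_iff _ _
    refine Or.inl (mkS Su D1.reverse D2 (SimpleGraph.Walk.cons hz.symm SimpleGraph.Walk.nil)
      hYp.of_append_left.reverse hYp.of_append_right ?_ ?_
      (one_le_length_of_ne _ hzy) (by simp) ?_ ?_ ?_ ?_ ?_ hxSu hySu haSu)
    · rw [SimpleGraph.Walk.isPath_def]
      simp [hzapex]
    · rw [SimpleGraph.Walk.length_reverse]
      exact one_le_length_of_ne _ (Ne.symm hzx)
    · intro v
      constructor
      · intro hv
        rcases hv with hvY | rfl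
        · rcases (hmemY v).1 hvY with h | h
          · exact Or.inl (by rwa [SimpleGraph.Walk.support_reverse, List.mem_reverse])
          · exact Or.inr (Or.inl h)
        · exact Or.inr (Or.inr (by simp))
      · intro hv
        rcases hv with h | h | h
        · rw [SimpleGraph.Walk.support_reverse, List.mem_reverse] at h
          exact Or.inl ((hmemY v).2 (Or.inl h))
        · exact Or.inl ((hmemY v).2 (Or.inr h))
        · simp only [SimpleGraph.Walk.support_cons, SimpleGraph.Walk.support_nil] at h
          rcases List.mem_cons.1 h with rfl | h'
          · exact Or.inl hzY
          · simp at h'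
            exact Or.inr h'
    · intro v hv1 hv2
      rw [SimpleGraph.Walk.support_reverse, List.mem_reverse] at hv1
      exact path_append_inter hYp hv1 hv2
    · intro v hv1 hv3
      rw [SimpleGraph.Walk.support_reverse, List.mem_reverse] at hv1
      simp only [SimpleGraph.Walk.support_cons, SimpleGraph.Walk.support_nil] at hv3
      rcases List.mem_cons.1 hv3 with rfl | h'
      · rfl
      · simp at h'
        exact absurd (h' ▸ hv1) hazD1
    · intro v hv2 hv3
      simp only [SimpleGraph.Walk.support_cons, SimpleGraph.Walk.support_nil] at hv3
      rcases List.mem_cons.1 hv3 with rfl | h'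
      · rfl
      · simp at h'
        exact absurd (h' ▸ hv2) hazD2
    · intro u v hu hv hadj
      rcases hu with huY | rfl
      · rcases hv with hvY | rfl
        · have := hchord u v huY hvY hadj
          rw [heq, SimpleGraph.Walk.edges_append, List.mem_append] at this
          rcases this with h | h
          · refine Or.inl ?_
            rw [SimpleGraph.Walk.edges_reverse, List.mem_reverse]
            exact h
          · exact Or.inr (Or.inl h)
        · have : u = c := huniq u huY hadj.symm
          subst this
          refine Or.inr (Or.inr ?_)
          simp
      · rcases hv with hvY | rfl
        · have : v = c := huniq v hvY hadj
          subst this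
          refine Or.inr (Or.inr ?_)
          rw [Sym2.eq_swap]
          simp
        · exact absurd hadj (G.irrefl)

/-- Case where an endpoint `b2` attaches to a prefix `RZ1` of `R` (ending at the
first attachment `z2`), and the apex `b1` also attaches to this prefix. -/
lemma prefixCase (C : Set V) {a₃ b1 b2 z2 : V}
    (hb1b2 : ¬ G.Adj b1 b2) (hb1a₃ : ¬ G.Adj b1 a₃) (hb1b2ne : b1 ≠ b2)
    (h3 : ∃ u ∈ C, G.Adj a₃ u) (h2 : ∃ u ∈ C, G.Adj b2 u)
    (RZ1 : G.Walk a₃ z2) (hR1path : RZ1.IsPath)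
    (hsubC : ∀ v ∈ RZ1.support, v = a₃ ∨ v ∈ C)
    (hchordR1 : ∀ u v, u ∈ RZ1.support → v ∈ RZ1.support → G.Adj u v →
      s(u,v) ∈ RZ1.edges)
    (hz2adj : G.Adj b2 z2)
    (hpre : ∀ v ∈ RZ1.support, v ≠ z2 → ¬ G.Adj b2 v)
    (hb2R : b2 ∉ RZ1.support) (hb1R : b1 ∉ RZ1.support)
    (hW : ∃ v ∈ RZ1.support, G.Adj b1 v) :
    Goal G a₃ b2 b1 C := by
  have hz2b2 : z2 ≠ b2 := fun h => hb2R (h ▸ RZ1.end_mem_support)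
  set E : G.Walk z2 b2 := SimpleGraph.Walk.cons hz2adj.symm SimpleGraph.Walk.nil with hE
  have hEpath : E.IsPath := by
    rw [hE, SimpleGraph.Walk.isPath_def]
    simp [hz2b2]
  have hEmem : ∀ v, v ∈ E.support ↔ (v = z2 ∨ v = b2) := by
    intro v; rw [hE]; simp
  set Y : G.Walk a₃ b2 := RZ1.append E with hY
  have hYpath : Y.IsPath := by
    refine isPath_append hR1path hEpath ?_
    intro v hv1 hv2
    rcases (hEmem v).1 hv2 with rfl | rfl
    · rfl
    · exact absurd hv1 hb2R
  have hYmem : ∀ v, v ∈ Y.support ↔ (v ∈ RZ1.support ∨ v = b2) := by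
    intro v
    rw [hY, SimpleGraph.Walk.mem_support_append_iff]
    constructor
    · rintro (h | h)
      · exact Or.inl h
      · rcases (hEmem v).1 h with rfl | rfl
        · exact Or.inl RZ1.end_mem_support
        · exact Or.inr rfl
    · rintro (h | rfl)
      · exact Or.inl h
      · exact Or.inr ((hEmem _).2 (Or.inr rfl))
  have hYedge : ∀ e, e ∈ Y.edges ↔ (e ∈ RZ1.edges ∨ e = s(z2, b2)) := by
    intro e
    rw [hY, SimpleGraph.Walk.edges_append]
    rw [List.mem_append]
    constructor
    · rintro (h | h)
      · exact Or.inl h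
      · rw [hE] at h
        simp at h
        exact Or.inr h
    · rintro (h | rfl)
      · exact Or.inl h
      · refine Or.inr ?_
        rw [hE]; simp
  refine apexCase C hb1a₃ hb1b2 h3 h2 Y hYpath ?_ ?_ ?_ ?_
  · intro v hv
    rcases (hYmem v).1 hv with h | rfl
    · rcases hsubC v h with h' | h'
      · exact Or.inl h'
      · exact Or.inr (Or.inr h')
    · exact Or.inr (Or.inl rfl)
  · intro u v hu hv hadj
    rcases (hYmem u).1 hu with hu' | rfl
    · rcases (hYmem v).1 hv with hv' | rfl
      · exact (hYedge _).2 (Or.inl (hchordR1 u v hu' hv' hadj))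
      · have : u = z2 := by
          by_contra hne
          exact hpre u hu' hne hadj.symm
        subst this
        exact (hYedge _).2 (Or.inr rfl)
    · rcases (hYmem v).1 hv with hv' | rfl
      · have : v = z2 := by
          by_contra hne
          exact hpre v hv' hne hadj
        subst this
        refine (hYedge _).2 (Or.inr ?_)
        rw [Sym2.eq_swap]
      · exact absurd hadj (G.irrefl)
  · intro h
    rcases (hYmem b1).1 h with h' | h'
    · exact hb1R h'
    · exact hb1b2ne h'
  · obtain ⟨v, hv, ha⟩ := hW
    exact ⟨v, (hYmem v).2 (Or.inl hv), ha⟩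

/-- Case where the apex `b1` attaches to `R`, and `R` is extended through `q`
into a path `B` of the original chordless path towards the endpoint `b2`. -/
lemma tailCase (C : Set V) {a₃ q u' b1 b2 : V}
    (hb1b2 : ¬ G.Adj b1 b2) (hb1a₃ : ¬ G.Adj b1 a₃)
    (h3 : ∃ u ∈ C, G.Adj a₃ u) (h2 : ∃ u ∈ C, G.Adj b2 u)
    (R : G.Walk a₃ q) (hRpath : R.IsPath)
    (hRC : ∀ v ∈ R.support, v = a₃ ∨ v ∈ C)
    (Rchord : ∀ u v, u ∈ R.support → v ∈ R.support → G.Adj u v → s(u,v) ∈ R.edges)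
    (B : G.Walk u' b2) (hBpath : B.IsPath)
    (hBC : ∀ v ∈ B.support, v = b2 ∨ v ∈ C)
    (Bchord : ∀ u v, u ∈ B.support → v ∈ B.support → G.Adj u v → s(u,v) ∈ B.edges)
    (hqu : G.Adj q u')
    (hdisj : ∀ v, v ∈ R.support → v ∈ B.support → False)
    (hqB : ∀ v ∈ B.support, G.Adj q v → v = u')
    (hcross : ∀ v ∈ R.support, v ≠ q → ∀ w ∈ B.support, ¬ G.Adj v w)
    (hb1R : b1 ∉ R.support) (hb1B : b1 ∉ B.support)
    (hnb : ∃ v ∈ R.support, G.Adj b1 v) :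
    Goal G a₃ b2 b1 C := by
  set E : G.Walk q b2 := SimpleGraph.Walk.cons hqu B with hE
  have hEpath : E.IsPath := by
    rw [hE, SimpleGraph.Walk.cons_isPath_iff]
    exact ⟨hBpath, fun h => hdisj q R.end_mem_support h⟩
  have hEmem : ∀ v, v ∈ E.support ↔ (v = q ∨ v ∈ B.support) := by
    intro v; rw [hE]; simp
  set Y : G.Walk a₃ b2 := R.append E with hY
  have hYpath : Y.IsPath := by
    refine isPath_append hRpath hEpath ?_
    intro v hv1 hv2
    rcases (hEmem v).1 hv2 with rfl | h
    · rfl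
    · exact absurd h (fun h' => hdisj v hv1 h')
  have hYmem : ∀ v, v ∈ Y.support ↔ (v ∈ R.support ∨ v ∈ B.support) := by
    intro v
    rw [hY, SimpleGraph.Walk.mem_support_append_iff]
    constructor
    · rintro (h | h)
      · exact Or.inl h
      · rcases (hEmem v).1 h with rfl | h'
        · exact Or.inl R.end_mem_support
        · exact Or.inr h'
    · rintro (h | h)
      · exact Or.inl h
      · exact Or.inr ((hEmem v).2 (Or.inr h))
  have hYedge : ∀ e, e ∈ Y.edges ↔ (e ∈ R.edges ∨ e = s(q, u') ∨ e ∈ B.edges) := by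
    intro e
    rw [hY, SimpleGraph.Walk.edges_append, List.mem_append, hE,
      SimpleGraph.Walk.edges_cons, List.mem_cons]
  refine apexCase C hb1a₃ hb1b2 h3 h2 Y hYpath ?_ ?_ ?_ ?_
  · intro v hv
    rcases (hYmem v).1 hv with h | h
    · rcases hRC v h with h' | h'
      · exact Or.inl h'
      · exact Or.inr (Or.inr h')
    · rcases hBC v h with h' | h'
      · exact Or.inr (Or.inl h')
      · exact Or.inr (Or.inr h')
  · intro u v hu hv hadj
    rcases (hYmem u).1 hu with hu' | hu'
    · rcases (hYmem v).1 hv with hv' | hv'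
      · exact (hYedge _).2 (Or.inl (Rchord u v hu' hv' hadj))
      · by_cases huq : u = q
        · subst huq
          have := hqB v hv' hadj
          subst this
          exact (hYedge _).2 (Or.inr (Or.inl rfl))
        · exact absurd hadj (hcross u hu' huq v hv')
    · rcases (hYmem v).1 hv with hv' | hv'
      · by_cases hvq : v = q
        · subst hvq
          have := hqB u hu' hadj.symm
          subst this
          refine (hYedge _).2 (Or.inr (Or.inl ?_))
          rw [Sym2.eq_swap]
        · exact absurd hadj.symm (hcross v hv' hvq u hu')
      · exact (hYedge _).2 (Or.inr (Or.inr (Bchord u v hu' hv' hadj)))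
  · intro h
    rcases (hYmem b1).1 h with h' | h'
    · exact hb1R h'
    · exact hb1B h'
  · obtain ⟨v, hv, ha⟩ := hnb
    exact ⟨v, (hYmem v).2 (Or.inl hv), ha⟩

set_option maxHeartbeats 2000000 in
theorem mainGoal (G : SimpleGraph V) (a₁ a₂ a₃ : V)
    (hne12 : a₁ ≠ a₂) (hne13 : a₁ ≠ a₃) (hne23 : a₂ ≠ a₃)
    (hind12 : ¬ G.Adj a₁ a₂) (hind13 : ¬ G.Adj a₁ a₃) (hind23 : ¬ G.Adj a₂ a₃)
    (C : Set V)
    (hCI : ∀ v ∈ C, v ≠ a₁ ∧ v ≠ a₂ ∧ v ≠ a₃)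
    (hCconn : (G.induce C).Connected)
    (h1 : ∃ u ∈ C, G.Adj a₁ u) (h2 : ∃ u ∈ C, G.Adj a₂ u)
    (h3 : ∃ u ∈ C, G.Adj a₃ u) :
    Goal G a₁ a₂ a₃ C := by
  classical
  have ha1C : a₁ ∉ C := fun h => (hCI a₁ h).1 rfl
  have ha2C : a₂ ∉ C := fun h => (hCI a₂ h).2.1 rfl
  have ha3C : a₃ ∉ C := fun h => (hCI a₃ h).2.2 rfl
  have walkC : ∀ u v : V, u ∈ C → v ∈ C → ∃ p : G.Walk u v, ∀ x ∈ p.support, x ∈ C := by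
    intro u v hu hv
    obtain ⟨w⟩ := hCconn.preconnected ⟨u, hu⟩ ⟨v, hv⟩
    refine ⟨ofInduce w, ?_⟩
    intro x hx
    rw [support_ofInduce] at hx
    rcases List.mem_map.1 hx with ⟨y, _, rfl⟩
    exact y.2
  set S₁ : Set V := insert a₁ (insert a₂ C) with hS₁def
  have hex : ∃ (v : V) (p : G.Walk a₁ v), v ∈ ({a₂} : Set V) ∧
      ∀ x ∈ p.support, x ∈ S₁ := by
    obtain ⟨u1, hu1C, hu1⟩ := h1
    obtain ⟨u2, hu2C, hu2⟩ := h2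
    obtain ⟨w, hw⟩ := walkC u1 u2 hu1C hu2C
    refine ⟨a₂, SimpleGraph.Walk.cons hu1 (w.concat hu2.symm), rfl, ?_⟩
    intro x hx
    rw [SimpleGraph.Walk.support_cons] at hx
    rcases List.mem_cons.1 hx with rfl | hx
    · exact Or.inl rfl
    · rw [SimpleGraph.Walk.support_concat] at hx
      simp only [List.concat_eq_append, List.mem_append, List.mem_singleton] at hx
      rcases hx with h | rfl
      · exact Or.inr (Or.inr (hw x h))
      · exact Or.inr (Or.inl rfl)
  obtain ⟨v₂, P, hv₂, hPsub, hPpath, hPmin⟩ := exists_min_walk a₁ S₁ {a₂} hex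
  have hv₂' : a₂ = v₂ := (Set.mem_singleton_iff.1 hv₂).symm
  subst hv₂'
  have Pchord : ∀ u v, u ∈ P.support → v ∈ P.support → G.Adj u v → s(u,v) ∈ P.edges :=
    fun u v hu hv h => min_walk_chordless P S₁ {a₂} rfl hPsub hPmin hu hv h
  have hPmem : ∀ v ∈ P.support, v = a₁ ∨ v = a₂ ∨ v ∈ C := by
    intro v hv
    rcases hPsub v hv with h | h | h
    · exact Or.inl h
    · exact Or.inr (Or.inl h)
    · exact Or.inr (Or.inr h)
  have hPa₃ : a₃ ∉ P.support := by
    intro h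
    rcases hPmem a₃ h with h | h | h
    · exact hne13 h.symm
    · exact hne23 h.symm
    · exact ha3C h
  by_cases hm : ∃ z ∈ P.support, G.Adj a₃ z
  · exact apexCase C (fun h => hind13 h.symm) (fun h => hind23 h.symm) h1 h2 P
      hPpath hPmem Pchord hPa₃ hm
  push_neg at hm
  -- m = 0 case
  set S₂ : Set V := {v | v = a₃ ∨ (v ∈ C ∧ v ∉ P.support)} with hS₂def
  set Astar : Set V := {v | (v ∈ C ∧ v ∉ P.support) ∧
    ∃ w, w ∈ P.support ∧ w ≠ a₁ ∧ w ≠ a₂ ∧ G.Adj v w} with hAdef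
  have hPlen : 2 ≤ P.length := by
    rcases Nat.lt_or_ge P.length 2 with h | h
    · exfalso
      interval_cases hl : P.length
      · exact hne12 (SimpleGraph.Walk.eq_of_length_eq_zero hl)
      · exact hind12 (SimpleGraph.Walk.adj_of_mem_edges P (walk_length_one_edge P hl))
    · exact h
  have hpnil : ¬ P.Nil := SimpleGraph.Walk.not_nil_iff_lt_length.2 (by omega)
  have haw₀ : G.Adj a₁ (P.getVert 1) := P.adj_snd hpnil
  have hw₀P : P.getVert 1 ∈ P.support :=
    SimpleGraph.Walk.mem_support_iff_exists_getVert.2 ⟨1, rfl, by omega⟩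
  have hw₀C : P.getVert 1 ∈ C := by
    rcases hPmem _ hw₀P with h | h | h
    · exact absurd (h ▸ haw₀) (G.irrefl)
    · exact absurd (h ▸ haw₀) hind12
    · exact h
  have hexR : ∃ (v : V) (p : G.Walk a₃ v), v ∈ Astar ∧ ∀ x ∈ p.support, x ∈ S₂ := by
    by_contra hno
    push_neg at hno
    set X : Set V := {v | ∃ p : G.Walk a₃ v, ∀ x ∈ p.support, x ∈ S₂} with hXdef
    have hnoX : ∀ v ∈ Astar, v ∉ X := by
      rintro v hv ⟨p, hp⟩
      obtain ⟨x, hx, hxn⟩ := hno v p hv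
      exact hxn (hp x hx)
    have key : ∀ (u w : V) (p : G.Walk u w), u ∈ X →
        (∀ x ∈ p.support, x ∈ insert a₃ C) → w ∈ X := by
      intro u w p
      induction p with
      | nil => exact fun h _ => h
      | @cons u b w hub p ih =>
        intro hu hsupp
        have hbX : b ∈ X := by
          have hb : b ∈ insert a₃ C := hsupp b (by simp)
          rcases Set.mem_insert_iff.1 hb with rfl | hbC
          · refine ⟨SimpleGraph.Walk.nil, ?_⟩
            intro x hx
            simp only [SimpleGraph.Walk.support_nil, List.mem_singleton] at hx
            subst hx
            exact Or.inl rfl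
          · by_cases hbP : b ∈ P.support
            · exfalso
              obtain ⟨pu, hpu⟩ := hu
              have huS₂ : u ∈ S₂ := hpu u pu.end_mem_support
              rcases huS₂ with rfl | ⟨huC, huP⟩
              · exact hm b hbP hub
              · exact hnoX u ⟨⟨huC, huP⟩, b, hbP, (hCI b hbC).1, (hCI b hbC).2.1, hub⟩
                  ⟨pu, hpu⟩
            · obtain ⟨pu, hpu⟩ := hu
              refine ⟨pu.concat hub, ?_⟩
              intro x hx
              rw [SimpleGraph.Walk.support_concat] at hx
              simp only [List.concat_eq_append, List.mem_append, List.mem_singleton] at hx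
              rcases hx with h | rfl
              · exact hpu x h
              · exact Or.inr ⟨hbC, hbP⟩
        exact ih hbX (fun x hx => hsupp x (by
          rw [SimpleGraph.Walk.support_cons]; exact List.mem_cons_of_mem _ hx))
    obtain ⟨u3, hu3C, hu3⟩ := h3
    obtain ⟨w, hw⟩ := walkC u3 (P.getVert 1) hu3C hw₀C
    have ha₃X : a₃ ∈ X := by
      refine ⟨SimpleGraph.Walk.nil, ?_⟩
      intro x hx
      simp only [SimpleGraph.Walk.support_nil, List.mem_singleton] at hx
      subst hx
      exact Or.inl rfl
    have hXw₀ : P.getVert 1 ∈ X := by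
      refine key a₃ _ (SimpleGraph.Walk.cons hu3 w) ha₃X ?_
      intro x hx
      rw [SimpleGraph.Walk.support_cons] at hx
      rcases List.mem_cons.1 hx with rfl | hx
      · exact Or.inl rfl
      · exact Or.inr (hw x hx)
    obtain ⟨pw, hpw⟩ := hXw₀
    rcases hpw _ pw.end_mem_support with h | ⟨_, hnp⟩
    · exact hPa₃ (h ▸ hw₀P)
    · exact hnp hw₀P
  obtain ⟨q, R, hqA, hRsub, hRpath, hRmin⟩ := exists_min_walk a₃ S₂ Astar hexR
  have Rchord : ∀ u v, u ∈ R.support → v ∈ R.support → G.Adj u v → s(u,v) ∈ R.edges :=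
    fun u v hu hv h => min_walk_chordless R S₂ Astar hqA hRsub hRmin hu hv h
  have Rfirst : ∀ v ∈ R.support, v ∈ Astar → v = q :=
    fun v hv hvA => min_walk_first_hit R S₂ Astar hRsub hRmin hv hvA
  have hqC : q ∈ C := hqA.1.1
  have hqP : q ∉ P.support := hqA.1.2
  have hRP : ∀ v, v ∈ R.support → v ∈ P.support → False := by
    intro v hv hvP
    rcases hRsub v hv with rfl | ⟨_, hnp⟩
    · exact hPa₃ hvP
    · exact hnp hvP
  have ha₁R : a₁ ∉ R.support := by
    intro h
    rcases hRsub a₁ h with h' | ⟨h', _⟩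
    · exact hne13 h'
    · exact ha1C h'
  have ha₂R : a₂ ∉ R.support := by
    intro h
    rcases hRsub a₂ h with h' | ⟨h', _⟩
    · exact hne23 h'
    · exact ha2C h'
  have hqa₃ : q ≠ a₃ := fun h => ha3C (h ▸ hqC)
  have hRmem : ∀ v ∈ R.support, v = a₃ ∨ v ∈ C := by
    intro v hv
    rcases hRsub v hv with h | ⟨h, _⟩
    · exact Or.inl h
    · exact Or.inr h
  have hRint : ∀ v ∈ R.support, v ≠ q → ∀ w ∈ P.support, w ≠ a₁ → w ≠ a₂ →
      ¬ G.Adj v w := by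
    intro v hv hvq w hwP hw1 hw2 hadj
    rcases hRsub v hv with rfl | ⟨hvC, hvP⟩
    · exact hm w hwP hadj
    · exact hvq (Rfirst v hv ⟨⟨hvC, hvP⟩, w, hwP, hw1, hw2, hadj⟩)
  obtain ⟨u0, hu0P, hu01, hu02, hqu0⟩ := hqA.2
  by_cases hJ2 : ∃ v ∈ R.support, G.Adj a₂ v
  · obtain ⟨z2, RZ1, RZ2, heqR2, hz2adj, hR1pre⟩ :=
      splitFirst R (fun v => G.Adj a₂ v) hJ2
    have hRapp : (RZ1.append RZ2).IsPath := heqR2 ▸ hRpath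
    have hRZ1sub : ∀ v ∈ RZ1.support, v ∈ R.support := fun v hv => by
      rw [heqR2]
      exact (SimpleGraph.Walk.mem_support_append_iff _ _).2 (Or.inl hv)
    have hRZ1chord : ∀ u v, u ∈ RZ1.support → v ∈ RZ1.support → G.Adj u v →
        s(u,v) ∈ RZ1.edges := by
      intro u v hu hv hadj
      have he := Rchord u v (hRZ1sub u hu) (hRZ1sub v hv) hadj
      rw [heqR2] at he
      exact edge_in_left hRapp he hu hv
    have hRZ1mem : ∀ v ∈ RZ1.support, v = a₃ ∨ v ∈ C :=
      fun v hv => hRmem v (hRZ1sub v hv)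
    by_cases hW1 : ∃ v ∈ RZ1.support, G.Adj a₁ v
    · -- 3e-i : apex a₁ attaches to the prefix RZ1
      refine goal_perm (fun v => by tauto) (prefixCase C hind12 hind13 hne12 h3 h2
        RZ1 hRapp.of_append_left hRZ1mem hRZ1chord hz2adj hR1pre
        (fun h => ha₂R (hRZ1sub _ h)) (fun h => ha₁R (hRZ1sub _ h)) hW1)
    · by_cases hJ1 : ∃ v ∈ R.support, G.Adj a₁ v
      · -- 3e-ii : apex a₂ attaches to the prefix RW1 (ending at first a₁-attachment)
        obtain ⟨z1, RW1, RW2, heqR1, hz1adj, hW1pre⟩ :=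
          splitFirst R (fun v => G.Adj a₁ v) hJ1
        have hRapp' : (RW1.append RW2).IsPath := heqR1 ▸ hRpath
        have hRW1sub : ∀ v ∈ RW1.support, v ∈ R.support := fun v hv => by
          rw [heqR1]
          exact (SimpleGraph.Walk.mem_support_append_iff _ _).2 (Or.inl hv)
        have hpre1 : RZ1.support <+: R.support :=
          ⟨RZ2.support.tail, by rw [heqR2, SimpleGraph.Walk.support_append]⟩
        have hpre2 : RW1.support <+: R.support :=
          ⟨RW2.support.tail, by rw [heqR1, SimpleGraph.Walk.support_append]⟩
        rcases List.prefix_or_prefix_of_prefix hpre2 hpre1 with hp | hp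
        · exact absurd ⟨z1, hp.subset RW1.end_mem_support, hz1adj⟩ hW1
        · have hRW1chord : ∀ u v, u ∈ RW1.support → v ∈ RW1.support → G.Adj u v →
              s(u,v) ∈ RW1.edges := by
            intro u v hu hv hadj
            have he := Rchord u v (hRW1sub u hu) (hRW1sub v hv) hadj
            rw [heqR1] at he
            exact edge_in_left hRapp' he hu hv
          refine goal_perm (fun v => by tauto) (prefixCase C
            (fun h => hind12 h.symm) hind23 hne12.symm h3 h1
            RW1 hRapp'.of_append_left (fun v hv => hRmem v (hRW1sub v hv)) hRW1chord
            hz1adj hW1pre (fun h => ha₁R (hRW1sub _ h)) (fun h => ha₂R (hRW1sub _ h))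
            ⟨z2, hp.subset RZ1.end_mem_support, hz2adj⟩)
      · -- 3d-mirror : Y = R + q→u1 + A1.reverse, apex a₂
        obtain ⟨u1, A1, B1, heqP, hNu1, hA1pre⟩ := splitFirst P
          (fun w => w ∈ P.support ∧ w ≠ a₁ ∧ w ≠ a₂ ∧ G.Adj q w)
          ⟨u0, hu0P, hu0P, hu01, hu02, hqu0⟩
        have hPapp : (A1.append B1).IsPath := heqP ▸ hPpath
        have hA1sub : ∀ v ∈ A1.support, v ∈ P.support := fun v hv => by
          rw [heqP]
          exact (SimpleGraph.Walk.mem_support_append_iff _ _).2 (Or.inl hv)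
        have ha₂A1 : a₂ ∉ A1.support := by
          intro h
          exact hNu1.2.2.1 (path_append_inter hPapp h B1.end_mem_support).symm
        refine goal_perm (fun v => by tauto) (tailCase C
          (fun h => hind12 h.symm) hind23 h3 h1 R hRpath hRmem Rchord
          A1.reverse hPapp.of_append_left.reverse ?_ ?_ hNu1.2.2.2 ?_ ?_ ?_
          ha₂R ?_ hJ2)
        · intro v hv
          rw [SimpleGraph.Walk.support_reverse, List.mem_reverse] at hv
          rcases hPmem v (hA1sub v hv) with h | h | h
          · exact Or.inl h
          · exact absurd (h ▸ hv) ha₂A1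
          · exact Or.inr h
        · intro u v hu hv hadj
          rw [SimpleGraph.Walk.support_reverse, List.mem_reverse] at hu hv
          have he := Pchord u v (hA1sub u hu) (hA1sub v hv) hadj
          rw [heqP] at he
          rw [SimpleGraph.Walk.edges_reverse, List.mem_reverse]
          exact edge_in_left hPapp he hu hv
        · intro v hvR hvA
          rw [SimpleGraph.Walk.support_reverse, List.mem_reverse] at hvA
          exact hRP v hvR (hA1sub v hvA)
        · intro v hv hadj
          rw [SimpleGraph.Walk.support_reverse, List.mem_reverse] at hv
          have hvP := hA1sub v hv
          have hv1 : v ≠ a₁ := by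
            rintro rfl
            exact hJ1 ⟨q, R.end_mem_support, hadj.symm⟩
          have hv2 : v ≠ a₂ := fun h => ha₂A1 (h ▸ hv)
          by_contra hne
          exact hA1pre v hv hne ⟨hvP, hv1, hv2, hadj⟩
        · intro v hvR hvq w hw hadj
          rw [SimpleGraph.Walk.support_reverse, List.mem_reverse] at hw
          have hwP := hA1sub w hw
          have hw1 : w ≠ a₁ := by
            rintro rfl
            exact hJ1 ⟨v, hvR, hadj.symm⟩
          have hw2 : w ≠ a₂ := fun h => ha₂A1 (h ▸ hw)
          exact hRint v hvR hvq w hwP hw1 hw2 hadj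
        · intro h
          rw [SimpleGraph.Walk.support_reverse, List.mem_reverse] at h
          exact ha₂A1 h
  · obtain ⟨u1, A1, B1, heqP, hNu1, hA1pre⟩ := splitFirst P
      (fun w => w ∈ P.support ∧ w ≠ a₁ ∧ w ≠ a₂ ∧ G.Adj q w)
      ⟨u0, hu0P, hu0P, hu01, hu02, hqu0⟩
    have hPapp : (A1.append B1).IsPath := heqP ▸ hPpath
    have hB1path : B1.IsPath := hPapp.of_append_right
    have hA1sub : ∀ v ∈ A1.support, v ∈ P.support := fun v hv => by
      rw [heqP]
      exact (SimpleGraph.Walk.mem_support_append_iff _ _).2 (Or.inl hv)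
    have hB1sub : ∀ v ∈ B1.support, v ∈ P.support := fun v hv => by
      rw [heqP]
      exact (SimpleGraph.Walk.mem_support_append_iff _ _).2 (Or.inr hv)
    have ha₁B1 : a₁ ∉ B1.support := by
      intro h
      exact hNu1.2.1 (path_append_inter hPapp A1.start_mem_support h).symm
    have ha₂A1 : a₂ ∉ A1.support := by
      intro h
      exact hNu1.2.2.1 (path_append_inter hPapp h B1.end_mem_support).symm
    have hu1B1 : u1 ∈ B1.reverse.support := by
      rw [SimpleGraph.Walk.support_reverse, List.mem_reverse]
      exact B1.start_mem_support
    obtain ⟨u2, E1, E2, heqB1r, hNu2, hE1pre⟩ := splitFirst B1.reverse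
      (fun w => w ∈ P.support ∧ w ≠ a₁ ∧ w ≠ a₂ ∧ G.Adj q w) ⟨u1, hu1B1, hNu1⟩
    have hB1rapp : (E1.append E2).IsPath := heqB1r ▸ hB1path.reverse
    have hE1sub : ∀ v ∈ E1.support, v ∈ B1.support := by
      intro v hv
      have : v ∈ B1.reverse.support := by
        rw [heqB1r]
        exact (SimpleGraph.Walk.mem_support_append_iff _ _).2 (Or.inl hv)
      rwa [SimpleGraph.Walk.support_reverse, List.mem_reverse] at this
    have hB2memiff : ∀ v, v ∈ E1.reverse.support ↔ v ∈ E1.support := by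
      intro v
      rw [SimpleGraph.Walk.support_reverse, List.mem_reverse]
    have hB2edgeiff : ∀ e, e ∈ E1.reverse.edges ↔ e ∈ E1.edges := by
      intro e
      rw [SimpleGraph.Walk.edges_reverse, List.mem_reverse]
    have hE1chord : ∀ u v, u ∈ E1.support → v ∈ E1.support → G.Adj u v →
        s(u,v) ∈ E1.edges := by
      intro u v hu hv hadj
      have he := Pchord u v (hB1sub u (hE1sub u hu)) (hB1sub v (hE1sub v hv)) hadj
      rw [heqP] at he
      have he2 := edge_in_right hPapp he (hE1sub u hu) (hE1sub v hv)
      have he3 : s(u,v) ∈ B1.reverse.edges := by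
        rw [SimpleGraph.Walk.edges_reverse, List.mem_reverse]
        exact he2
      rw [heqB1r] at he3
      exact edge_in_left hB1rapp he3 hu hv
    by_cases hJ1 : ∃ v ∈ R.support, G.Adj a₁ v
    · -- 3d : Y = R + q→u2 + B2, apex a₁
      refine goal_perm (fun v => by tauto) (tailCase C hind12 hind13 h3 h2
        R hRpath hRmem Rchord E1.reverse hB1rapp.of_append_left.reverse
        ?_ ?_ hNu2.2.2.2 ?_ ?_ ?_ ha₁R ?_ hJ1)
      · intro v hv
        rw [hB2memiff] at hv
        rcases hPmem v (hB1sub v (hE1sub v hv)) with h | h | h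
        · exact absurd (h ▸ hv) (fun hc => ha₁B1 (hE1sub _ hc))
        · exact Or.inl h
        · exact Or.inr h
      · intro u v hu hv hadj
        rw [hB2memiff] at hu hv
        rw [hB2edgeiff]
        exact hE1chord u v hu hv hadj
      · intro v hvR hvB
        rw [hB2memiff] at hvB
        exact hRP v hvR (hB1sub v (hE1sub v hvB))
      · intro v hv hadj
        rw [hB2memiff] at hv
        have hvP := hB1sub v (hE1sub v hv)
        have hv1 : v ≠ a₁ := fun h => ha₁B1 (h ▸ hE1sub v hv)
        have hv2 : v ≠ a₂ := by
          rintro rfl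
          exact hJ2 ⟨q, R.end_mem_support, hadj.symm⟩
        by_contra hne
        exact hE1pre v hv hne ⟨hvP, hv1, hv2, hadj⟩
      · intro v hvR hvq w hw hadj
        rw [hB2memiff] at hw
        have hwP := hB1sub w (hE1sub w hw)
        have hw1 : w ≠ a₁ := fun h => ha₁B1 (h ▸ hE1sub w hw)
        have hw2 : w ≠ a₂ := by
          rintro rfl
          exact hJ2 ⟨v, hvR, hadj.symm⟩
        exact hRint v hvR hvq w hwP hw1 hw2 hadj
      · intro h
        rw [hB2memiff] at h
        exact ha₁B1 (hE1sub _ h)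
    · -- α : no a₁/a₂ attachments on R
      have memP : ∀ v, v ∈ P.support ↔ (v ∈ A1.support ∨ v ∈ B1.support) := by
        intro v
        rw [heqP]
        exact SimpleGraph.Walk.mem_support_append_iff _ _
      have memB1 : ∀ v, v ∈ B1.support ↔ (v ∈ E1.support ∨ v ∈ E2.support) := by
        intro v
        constructor
        · intro h
          have h' : v ∈ B1.reverse.support := by
            rw [SimpleGraph.Walk.support_reverse, List.mem_reverse]
            exact h
          rw [heqB1r] at h'
          exact (SimpleGraph.Walk.mem_support_append_iff _ _).1 h'
        · intro h
          have h' : v ∈ B1.reverse.support := by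
            rw [heqB1r]
            exact (SimpleGraph.Walk.mem_support_append_iff _ _).2 h
          rwa [SimpleGraph.Walk.support_reverse, List.mem_reverse] at h'
      have hE2subB1 : ∀ v ∈ E2.support, v ∈ B1.support := fun v hv =>
        (memB1 v).2 (Or.inr hv)
      have edgeP : ∀ e, e ∈ P.edges ↔ (e ∈ A1.edges ∨ e ∈ B1.edges) := by
        intro e
        rw [heqP, SimpleGraph.Walk.edges_append, List.mem_append]
      have edgeB1 : ∀ e, e ∈ B1.edges ↔ (e ∈ E1.edges ∨ e ∈ E2.edges) := by
        intro e
        constructor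
        · intro h
          have h' : e ∈ B1.reverse.edges := by
            rw [SimpleGraph.Walk.edges_reverse, List.mem_reverse]
            exact h
          rw [heqB1r, SimpleGraph.Walk.edges_append, List.mem_append] at h'
          exact h'
        · intro h
          have h' : e ∈ B1.reverse.edges := by
            rw [heqB1r, SimpleGraph.Walk.edges_append, List.mem_append]
            exact h
          rwa [SimpleGraph.Walk.edges_reverse, List.mem_reverse] at h'
      have crossPR : ∀ u v, u ∈ P.support → v ∈ R.support → G.Adj u v →
          v = q ∧ u ≠ a₁ ∧ u ≠ a₂ := by
        intro u v hu hv hadj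
        have hu1' : u ≠ a₁ := by rintro rfl; exact hJ1 ⟨v, hv, hadj⟩
        have hu2' : u ≠ a₂ := by rintro rfl; exact hJ2 ⟨v, hv, hadj⟩
        refine ⟨?_, hu1', hu2'⟩
        by_contra hvq
        exact hRint v hv hvq u hu hu1' hu2' hadj.symm
      have hqR : q ∈ R.support := R.end_mem_support
      have hu1P : u1 ∈ P.support := hNu1.1
      have hu2P : u2 ∈ P.support := hNu2.1
      by_cases hu12 : u1 = u2
      · -- 3a : q attaches only at u1; S centered at u1
        have hNsub : ∀ w, w ∈ P.support → w ≠ a₁ → w ≠ a₂ → G.Adj q w → w = u1 := by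
          intro w hwP hw1 hw2 hadj
          have hNw : w ∈ P.support ∧ w ≠ a₁ ∧ w ≠ a₂ ∧ G.Adj q w := ⟨hwP, hw1, hw2, hadj⟩
          rcases (memP w).1 hwP with hA | hB
          · by_contra hne
            exact hA1pre w hA hne hNw
          · rcases (memB1 w).1 hB with hE1m | hE2m
            · have hwu2 : w = u2 := by
                by_contra hne
                exact hE1pre w hE1m hne hNw
              rw [hwu2, ← hu12]
            · have hE2path : E2.IsPath := hB1rapp.of_append_right
              have hlen0 : E2.length = 0 := by
                subst hu12
                exact nil_of_isPath_loop E2 hE2path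
              have hsupp : E2.support = [u2] := by
                cases E2 with
                | nil => rfl
                | cons h p => simp [SimpleGraph.Walk.length_cons] at hlen0
              rw [hsupp] at hE2m
              simp at hE2m
              rw [hE2m, ← hu12]
        set Su : Set V := {v | v ∈ P.support ∨ v ∈ R.support} with hSudef
        have hsubSu : Su ⊆ C ∪ {w | ∃ u ∈ C, G.Adj u w} := by
          intro v hv
          rcases hv with hvP | hvR
          · rcases hPmem v hvP with rfl | rfl | h
            · obtain ⟨u, huC, hu⟩ := h1
              exact Or.inr ⟨u, huC, hu.symm⟩
            · obtain ⟨u, huC, hu⟩ := h2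
              exact Or.inr ⟨u, huC, hu.symm⟩
            · exact Or.inl h
          · rcases hRmem v hvR with rfl | h
            · obtain ⟨u, huC, hu⟩ := h3
              exact Or.inr ⟨u, huC, hu.symm⟩
            · exact Or.inl h
        have ha₁Su : a₁ ∈ Su := Or.inl P.start_mem_support
        have ha₂Su : a₂ ∈ Su := Or.inl P.end_mem_support
        have ha₃Su : a₃ ∈ Su := Or.inr R.start_mem_support
        refine ⟨Su, hsubSu, ha₁Su, ha₂Su, ha₃Su, ⟨⟨a₁, ha₁Su⟩, ⟨a₂, ha₂Su⟩, ⟨a₃, ha₃Su⟩,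
          extremEq Su ha₁Su ha₂Su ha₃Su, Or.inl ?_⟩⟩
        refine mkS Su A1.reverse B1
          (SimpleGraph.Walk.cons hNu1.2.2.2.symm R.reverse)
          hPapp.of_append_left.reverse hB1path ?_ ?_
          (one_le_length_of_ne _ hNu1.2.2.1) (by simp) ?_ ?_ ?_ ?_ ?_
          ha₁Su ha₂Su ha₃Su
        · rw [SimpleGraph.Walk.cons_isPath_iff]
          refine ⟨hRpath.reverse, ?_⟩
          intro h
          rw [SimpleGraph.Walk.support_reverse, List.mem_reverse] at h
          exact hRP u1 h hu1P
        · rw [SimpleGraph.Walk.length_reverse]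
          exact one_le_length_of_ne _ (Ne.symm hNu1.2.1)
        · intro x
          constructor
          · intro hx
            rcases hx with hxP | hxR
            · rcases (memP x).1 hxP with h | h
              · refine Or.inl ?_
                rwa [SimpleGraph.Walk.support_reverse, List.mem_reverse]
              · exact Or.inr (Or.inl h)
            · refine Or.inr (Or.inr ?_)
              rw [SimpleGraph.Walk.support_cons]
              refine List.mem_cons_of_mem _ ?_
              rwa [SimpleGraph.Walk.support_reverse, List.mem_reverse]
          · intro hx
            rcases hx with h | h | h
            · rw [SimpleGraph.Walk.support_reverse, List.mem_reverse] at h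
              exact Or.inl (hA1sub x h)
            · exact Or.inl (hB1sub x h)
            · rw [SimpleGraph.Walk.support_cons] at h
              rcases List.mem_cons.1 h with rfl | h'
              · exact Or.inl hu1P
              · rw [SimpleGraph.Walk.support_reverse, List.mem_reverse] at h'
                exact Or.inr h'
        · intro x hx1 hx2
          rw [SimpleGraph.Walk.support_reverse, List.mem_reverse] at hx1
          exact path_append_inter hPapp hx1 hx2
        · intro x hx1 hx3
          rw [SimpleGraph.Walk.support_reverse, List.mem_reverse] at hx1
          rw [SimpleGraph.Walk.support_cons] at hx3
          rcases List.mem_cons.1 hx3 with rfl | h'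
          · rfl
          · rw [SimpleGraph.Walk.support_reverse, List.mem_reverse] at h'
            exact absurd (hA1sub x hx1) (fun hc => hRP x h' hc)
        · intro x hx2 hx3
          rw [SimpleGraph.Walk.support_cons] at hx3
          rcases List.mem_cons.1 hx3 with rfl | h'
          · rfl
          · rw [SimpleGraph.Walk.support_reverse, List.mem_reverse] at h'
            exact absurd (hB1sub x hx2) (fun hc => hRP x h' hc)
        · intro x y hx hy hadj
          have memrevA : ∀ e, e ∈ A1.reverse.edges ↔ e ∈ A1.edges := by
            intro e
            rw [SimpleGraph.Walk.edges_reverse, List.mem_reverse]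
          have memconsR : ∀ e, e ∈ (SimpleGraph.Walk.cons hNu1.2.2.2.symm
              R.reverse).edges ↔ (e = s(u1, q) ∨ e ∈ R.edges) := by
            intro e
            rw [SimpleGraph.Walk.edges_cons, List.mem_cons,
              SimpleGraph.Walk.edges_reverse, List.mem_reverse]
          rcases hx with hxP | hxR
          · rcases hy with hyP | hyR
            · rcases (edgeP _).1 (Pchord x y hxP hyP hadj) with h | h
              · exact Or.inl ((memrevA _).2 h)
              · exact Or.inr (Or.inl h)
            · obtain ⟨rfl, hx1, hx2⟩ := crossPR x y hxP hyR hadj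
              have : x = u1 := hNsub x hxP hx1 hx2 hadj.symm
              subst this
              exact Or.inr (Or.inr ((memconsR _).2 (Or.inl rfl)))
          · rcases hy with hyP | hyR
            · obtain ⟨rfl, hy1, hy2⟩ := crossPR y x hyP hxR hadj.symm
              have : y = u1 := hNsub y hyP hy1 hy2 hadj
              subst this
              refine Or.inr (Or.inr ((memconsR _).2 (Or.inl ?_)))
              rw [Sym2.eq_swap]
            · exact Or.inr (Or.inr ((memconsR _).2 (Or.inr (Rchord x y hxR hyR hadj))))
      · -- u1 ≠ u2 : prepare shared facts
        have hu1E1 : u1 ∉ E1.support := by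
          intro h
          exact hu12 (path_append_inter hB1rapp h E2.end_mem_support)
        have hA1E1disj : ∀ v, v ∈ A1.support → v ∈ E1.support → False := by
          intro v hvA hvE
          have : v = u1 := path_append_inter hPapp hvA (hE1sub v hvE)
          subst this
          exact hu1E1 hvE
        have hedgeloc : ∀ x y, (x ∈ A1.support ∨ x ∈ E1.support) →
            (y ∈ A1.support ∨ y ∈ E1.support) → s(x,y) ∈ P.edges →
            (s(x,y) ∈ A1.edges ∨ s(x,y) ∈ E1.edges ∨
              (x = u1 ∧ y = u2) ∨ (x = u2 ∧ y = u1)) := by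
          intro x y hx hy he
          rcases (edgeP _).1 he with h | h
          · exact Or.inl h
          · rcases (edgeB1 _).1 h with h' | h'
            · exact Or.inr (Or.inl h')
            · have hxE2 : x ∈ E2.support := E2.fst_mem_support_of_mem_edges h'
              have hyE2 : y ∈ E2.support := E2.snd_mem_support_of_mem_edges h'
              have hxy : x ≠ y := (SimpleGraph.Walk.adj_of_mem_edges _ h').ne
              have hxu : x = u1 ∨ x = u2 := by
                rcases hx with hxA | hxE
                · exact Or.inl (path_append_inter hPapp hxA (hE2subB1 x hxE2))
                · exact Or.inr (path_append_inter hB1rapp hxE hxE2)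
              have hyu : y = u1 ∨ y = u2 := by
                rcases hy with hyA | hyE
                · exact Or.inl (path_append_inter hPapp hyA (hE2subB1 y hyE2))
                · exact Or.inr (path_append_inter hB1rapp hyE hyE2)
              rcases hxu with rfl | rfl <;> rcases hyu with rfl | rfl
              · exact absurd rfl hxy
              · exact Or.inr (Or.inr (Or.inl ⟨rfl, rfl⟩))
              · exact Or.inr (Or.inr (Or.inr ⟨rfl, rfl⟩))
              · exact absurd rfl hxy
        set Su : Set V := {v | v ∈ A1.support ∨ v ∈ E1.support ∨ v ∈ R.support}
          with hSudef
        have hsubSu : Su ⊆ C ∪ {w | ∃ u ∈ C, G.Adj u w} := by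
          intro v hv
          have hvPR : v ∈ P.support ∨ v ∈ R.support := by
            rcases hv with h | h | h
            · exact Or.inl (hA1sub v h)
            · exact Or.inl (hB1sub v (hE1sub v h))
            · exact Or.inr h
          rcases hvPR with hvP | hvR
          · rcases hPmem v hvP with rfl | rfl | h
            · obtain ⟨u, huC, hu⟩ := h1
              exact Or.inr ⟨u, huC, hu.symm⟩
            · obtain ⟨u, huC, hu⟩ := h2
              exact Or.inr ⟨u, huC, hu.symm⟩
            · exact Or.inl h
          · rcases hRmem v hvR with rfl | h
            · obtain ⟨u, huC, hu⟩ := h3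
              exact Or.inr ⟨u, huC, hu.symm⟩
            · exact Or.inl h
        have ha₁Su : a₁ ∈ Su := Or.inl A1.start_mem_support
        have ha₂Su : a₂ ∈ Su := Or.inr (Or.inl E1.start_mem_support)
        have ha₃Su : a₃ ∈ Su := Or.inr (Or.inr R.start_mem_support)
        have memrevA : ∀ e, e ∈ A1.reverse.edges ↔ e ∈ A1.edges := by
          intro e
          rw [SimpleGraph.Walk.edges_reverse, List.mem_reverse]
        have memrevE : ∀ e, e ∈ E1.reverse.edges ↔ e ∈ E1.edges := by
          intro e
          rw [SimpleGraph.Walk.edges_reverse, List.mem_reverse]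
        have memrevR : ∀ e, e ∈ R.reverse.edges ↔ e ∈ R.edges := by
          intro e
          rw [SimpleGraph.Walk.edges_reverse, List.mem_reverse]
        have msupA : ∀ v, v ∈ A1.reverse.support ↔ v ∈ A1.support := by
          intro v
          rw [SimpleGraph.Walk.support_reverse, List.mem_reverse]
        have msupE : ∀ v, v ∈ E1.reverse.support ↔ v ∈ E1.support := by
          intro v
          rw [SimpleGraph.Walk.support_reverse, List.mem_reverse]
        have msupR : ∀ v, v ∈ R.reverse.support ↔ v ∈ R.support := by
          intro v
          rw [SimpleGraph.Walk.support_reverse, List.mem_reverse]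
        have hNself : ∀ x, x ∈ A1.support ∨ x ∈ E1.support → G.Adj q x →
            (x ∈ A1.support → x = u1) ∧ (x ∈ E1.support → x = u2) := by
          intro x hx hadj
          have hxP : x ∈ P.support := by
            rcases hx with h | h
            · exact hA1sub x h
            · exact hB1sub x (hE1sub x h)
          have hx1 : x ≠ a₁ := by
            rintro rfl
            exact hJ1 ⟨q, hqR, hadj.symm⟩
          have hx2 : x ≠ a₂ := by
            rintro rfl
            exact hJ2 ⟨q, hqR, hadj.symm⟩
          constructor
          · intro hA
            by_contra hne
            exact hA1pre x hA hne ⟨hxP, hx1, hx2, hadj⟩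
          · intro hE
            by_contra hne
            exact hE1pre x hE hne ⟨hxP, hx1, hx2, hadj⟩
        by_cases hadj12 : G.Adj u1 u2
        · -- 3c : a T with triangle u1 u2 q
          refine ⟨Su, hsubSu, ha₁Su, ha₂Su, ha₃Su, ⟨⟨a₁, ha₁Su⟩, ⟨a₂, ha₂Su⟩,
            ⟨a₃, ha₃Su⟩, extremEq Su ha₁Su ha₂Su ha₃Su, Or.inr (Or.inl ?_)⟩⟩
          refine mkT Su A1.reverse E1.reverse R.reverse
            hPapp.of_append_left.reverse hB1rapp.of_append_left.reverse
            hRpath.reverse ?_ ?_ ?_ hadj12 hNu2.2.2.2.symm hNu1.2.2.2.symm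
            ?_ ?_ ?_ ?_ ?_ ha₁Su ha₂Su ha₃Su
          · rw [SimpleGraph.Walk.length_reverse]
            exact one_le_length_of_ne _ (Ne.symm hNu1.2.1)
          · rw [SimpleGraph.Walk.length_reverse]
            exact one_le_length_of_ne _ (Ne.symm hNu2.2.2.1)
          · rw [SimpleGraph.Walk.length_reverse]
            exact one_le_length_of_ne _ (fun h => hqa₃ h.symm)
          · intro x
            rw [hSudef]
            simp only [Set.mem_setOf_eq, msupA, msupE, msupR]
          · intro x hx1 hx2
            rw [msupA] at hx1
            rw [msupE] at hx2
            exact hA1E1disj x hx1 hx2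
          · intro x hx1 hx3
            rw [msupA] at hx1
            rw [msupR] at hx3
            exact hRP x hx3 (hA1sub x hx1)
          · intro x hx2 hx3
            rw [msupE] at hx2
            rw [msupR] at hx3
            exact hRP x hx3 (hB1sub x (hE1sub x hx2))
          · intro x y hx hy hadj
            rcases hx with hxA | hxE | hxR
            · rcases hy with hyA | hyE | hyR
              · exact Or.inl ((memrevA _).2 (edge_in_left hPapp ((heqP ▸ Pchord x y
                  (hA1sub x hxA) (hA1sub y hyA) hadj) : _) hxA hyA))
              · rcases hedgeloc x y (Or.inl hxA) (Or.inr hyE)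
                    (Pchord x y (hA1sub x hxA) (hB1sub y (hE1sub y hyE)) hadj)
                  with h | h | ⟨rfl, rfl⟩ | ⟨rfl, rfl⟩
                · exact Or.inl ((memrevA _).2 h)
                · exact Or.inr (Or.inl ((memrevE _).2 h))
                · exact Or.inr (Or.inr (Or.inr (Or.inl rfl)))
                · refine Or.inr (Or.inr (Or.inr (Or.inl ?_)))
                  rw [Sym2.eq_swap]
              · obtain ⟨rfl, _, _⟩ := crossPR x y (hA1sub x hxA) hyR hadj
                have hxu1 : x = u1 := (hNself x (Or.inl hxA) hadj.symm).1 hxA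
                subst hxu1
                exact Or.inr (Or.inr (Or.inr (Or.inr (Or.inr rfl))))
            · rcases hy with hyA | hyE | hyR
              · rcases hedgeloc x y (Or.inr hxE) (Or.inl hyA)
                    (Pchord x y (hB1sub x (hE1sub x hxE)) (hA1sub y hyA) hadj)
                  with h | h | ⟨rfl, rfl⟩ | ⟨rfl, rfl⟩
                · exact Or.inl ((memrevA _).2 h)
                · exact Or.inr (Or.inl ((memrevE _).2 h))
                · exact Or.inr (Or.inr (Or.inr (Or.inl rfl)))
                · refine Or.inr (Or.inr (Or.inr (Or.inl ?_)))
                  rw [Sym2.eq_swap]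
              · exact Or.inr (Or.inl ((memrevE _).2 (edge_in_left hB1rapp
                  (by
                    have he := Pchord x y (hB1sub x (hE1sub x hxE))
                      (hB1sub y (hE1sub y hyE)) hadj
                    have he2 := edge_in_right hPapp ((heqP ▸ he) : _)
                      (hE1sub x hxE) (hE1sub y hyE)
                    have he3 : s(x,y) ∈ B1.reverse.edges := by
                      rw [SimpleGraph.Walk.edges_reverse, List.mem_reverse]
                      exact he2
                    rw [heqB1r] at he3
                    exact he3) hxE hyE)))
              · obtain ⟨rfl, _, _⟩ := crossPR x y (hB1sub x (hE1sub x hxE)) hyR hadj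
                have hxu2 : x = u2 := (hNself x (Or.inr hxE) hadj.symm).2 hxE
                subst hxu2
                exact Or.inr (Or.inr (Or.inr (Or.inr (Or.inl rfl))))
            · rcases hy with hyA | hyE | hyR
              · obtain ⟨rfl, _, _⟩ := crossPR y x (hA1sub y hyA) hxR hadj.symm
                have hyu1 : y = u1 := (hNself y (Or.inl hyA) hadj).1 hyA
                subst hyu1
                refine Or.inr (Or.inr (Or.inr (Or.inr (Or.inr ?_))))
                rw [Sym2.eq_swap]
              · obtain ⟨rfl, _, _⟩ := crossPR y x (hB1sub y (hE1sub y hyE)) hxR hadj.symm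
                have hyu2 : y = u2 := (hNself y (Or.inr hyE) hadj).2 hyE
                subst hyu2
                refine Or.inr (Or.inr (Or.inr (Or.inr (Or.inl ?_))))
                rw [Sym2.eq_swap]
              · exact Or.inr (Or.inr (Or.inl ((memrevR _).2
                  (Rchord x y hxR hyR hadj))))
        · -- 3b : an S centered at q
          refine ⟨Su, hsubSu, ha₁Su, ha₂Su, ha₃Su, ⟨⟨a₁, ha₁Su⟩, ⟨a₂, ha₂Su⟩,
            ⟨a₃, ha₃Su⟩, extremEq Su ha₁Su ha₂Su ha₃Su, Or.inl ?_⟩⟩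
          refine mkS Su (SimpleGraph.Walk.cons hNu1.2.2.2 A1.reverse)
            (SimpleGraph.Walk.cons hNu2.2.2.2 E1.reverse) R.reverse
            ?_ ?_ hRpath.reverse (by simp) (by simp) ?_ ?_ ?_ ?_ ?_ ?_
            ha₁Su ha₂Su ha₃Su
          · rw [SimpleGraph.Walk.cons_isPath_iff]
            refine ⟨hPapp.of_append_left.reverse, ?_⟩
            intro h
            rw [msupA] at h
            exact hqP (hA1sub q h)
          · rw [SimpleGraph.Walk.cons_isPath_iff]
            refine ⟨hB1rapp.of_append_left.reverse, ?_⟩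
            intro h
            rw [msupE] at h
            exact hqP (hB1sub q (hE1sub q h))
          · rw [SimpleGraph.Walk.length_reverse]
            exact one_le_length_of_ne _ (fun h => hqa₃ h.symm)
          · intro x
            rw [hSudef]
            simp only [Set.mem_setOf_eq, SimpleGraph.Walk.support_cons, List.mem_cons,
              msupA, msupE, msupR]
            constructor
            · rintro (h | h | h)
              · exact Or.inl (Or.inr h)
              · exact Or.inr (Or.inl (Or.inr h))
              · exact Or.inr (Or.inr h)
            · rintro ((rfl | h) | (rfl | h) | h)
              · exact Or.inr (Or.inr hqR)
              · exact Or.inl h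
              · exact Or.inr (Or.inr hqR)
              · exact Or.inr (Or.inl h)
              · exact Or.inr (Or.inr h)
          · intro x hx1 hx2
            rw [SimpleGraph.Walk.support_cons, List.mem_cons] at hx1 hx2
            rcases hx1 with rfl | hx1
            · rfl
            · rcases hx2 with rfl | hx2
              · rfl
              · rw [msupA] at hx1
                rw [msupE] at hx2
                exact absurd hx2 (fun hc => hA1E1disj x hx1 hc)
          · intro x hx1 hx3
            rw [SimpleGraph.Walk.support_cons, List.mem_cons] at hx1
            rw [msupR] at hx3
            rcases hx1 with rfl | hx1
            · rfl
            · rw [msupA] at hx1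
              exact absurd (hA1sub x hx1) (fun hc => hRP x hx3 hc)
          · intro x hx2 hx3
            rw [SimpleGraph.Walk.support_cons, List.mem_cons] at hx2
            rw [msupR] at hx3
            rcases hx2 with rfl | hx2
            · rfl
            · rw [msupE] at hx2
              exact absurd (hB1sub x (hE1sub x hx2)) (fun hc => hRP x hx3 hc)
          · intro x y hx hy hadj
            have memc1 : ∀ e, e ∈ (SimpleGraph.Walk.cons hNu1.2.2.2
                A1.reverse).edges ↔ (e = s(q, u1) ∨ e ∈ A1.edges) := by
              intro e
              rw [SimpleGraph.Walk.edges_cons, List.mem_cons, memrevA]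
            have memc2 : ∀ e, e ∈ (SimpleGraph.Walk.cons hNu2.2.2.2
                E1.reverse).edges ↔ (e = s(q, u2) ∨ e ∈ E1.edges) := by
              intro e
              rw [SimpleGraph.Walk.edges_cons, List.mem_cons, memrevE]
            rcases hx with hxA | hxE | hxR
            · rcases hy with hyA | hyE | hyR
              · exact Or.inl ((memc1 _).2 (Or.inr (edge_in_left hPapp
                  ((heqP ▸ Pchord x y (hA1sub x hxA) (hA1sub y hyA) hadj) : _)
                  hxA hyA)))
              · rcases hedgeloc x y (Or.inl hxA) (Or.inr hyE)
                    (Pchord x y (hA1sub x hxA) (hB1sub y (hE1sub y hyE)) hadj)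
                  with h | h | ⟨rfl, rfl⟩ | ⟨rfl, rfl⟩
                · exact Or.inl ((memc1 _).2 (Or.inr h))
                · exact Or.inr (Or.inl ((memc2 _).2 (Or.inr h)))
                · exact absurd hadj hadj12
                · exact absurd hadj.symm hadj12
              · obtain ⟨rfl, _, _⟩ := crossPR x y (hA1sub x hxA) hyR hadj
                have hxu1 : x = u1 := (hNself x (Or.inl hxA) hadj.symm).1 hxA
                subst hxu1
                refine Or.inl ((memc1 _).2 (Or.inl ?_))
                rw [Sym2.eq_swap]
            · rcases hy with hyA | hyE | hyR
              · rcases hedgeloc x y (Or.inr hxE) (Or.inl hyA)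
                    (Pchord x y (hB1sub x (hE1sub x hxE)) (hA1sub y hyA) hadj)
                  with h | h | ⟨rfl, rfl⟩ | ⟨rfl, rfl⟩
                · exact Or.inl ((memc1 _).2 (Or.inr h))
                · exact Or.inr (Or.inl ((memc2 _).2 (Or.inr h)))
                · exact absurd hadj hadj12
                · exact absurd hadj.symm hadj12
              · refine Or.inr (Or.inl ((memc2 _).2 (Or.inr (edge_in_left hB1rapp
                  (by
                    have he := Pchord x y (hB1sub x (hE1sub x hxE))
                      (hB1sub y (hE1sub y hyE)) hadj
                    have he2 := edge_in_right hPapp ((heqP ▸ he) : _)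
                      (hE1sub x hxE) (hE1sub y hyE)
                    have he3 : s(x,y) ∈ B1.reverse.edges := by
                      rw [SimpleGraph.Walk.edges_reverse, List.mem_reverse]
                      exact he2
                    rw [heqB1r] at he3
                    exact he3) hxE hyE))))
              · obtain ⟨rfl, _, _⟩ := crossPR x y (hB1sub x (hE1sub x hxE)) hyR hadj
                have hxu2 : x = u2 := (hNself x (Or.inr hxE) hadj.symm).2 hxE
                subst hxu2
                refine Or.inr (Or.inl ((memc2 _).2 (Or.inl ?_)))
                rw [Sym2.eq_swap]
            · rcases hy with hyA | hyE | hyR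
              · obtain ⟨rfl, _, _⟩ := crossPR y x (hA1sub y hyA) hxR hadj.symm
                have hyu1 : y = u1 := (hNself y (Or.inl hyA) hadj).1 hyA
                subst hyu1
                exact Or.inl ((memc1 _).2 (Or.inl rfl))
              · obtain ⟨rfl, _, _⟩ := crossPR y x (hB1sub y (hE1sub y hyE)) hxR hadj.symm
                have hyu2 : y = u2 := (hNself y (Or.inr hyE) hadj).2 hyE
                subst hyu2
                exact Or.inr (Or.inl ((memc2 _).2 (Or.inl rfl)))
              · exact Or.inr (Or.inr ((memrevR _).2 (Rchord x y hxR hyR hadj)))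

end STMProof

end STMInfra

/-- Lemma 3.1: if `I = {a₁,a₂,a₃}` is an independent set of size 3 and `C` is a
connected component of `G − I` with `I ⊆ N(C)`, then `G[N[C]]` has an induced
subgraph in `S ∪ T ∪ M` whose set of extremities is exactly `I`. -/
theorem stmt0 {V : Type u} [Fintype V] (G : SimpleGraph V) (a₁ a₂ a₃ : V)
    (hne12 : a₁ ≠ a₂) (hne13 : a₁ ≠ a₃) (hne23 : a₂ ≠ a₃)
    (hind12 : ¬ G.Adj a₁ a₂) (hind13 : ¬ G.Adj a₁ a₃) (hind23 : ¬ G.Adj a₂ a₃)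
    (C : Set V)
    (hCI : ∀ v ∈ C, v ≠ a₁ ∧ v ≠ a₂ ∧ v ≠ a₃)
    (hCconn : (G.induce C).Connected)
    (hCmax : ∀ u ∈ C, ∀ w : V, w ∉ C → w ≠ a₁ → w ≠ a₂ → w ≠ a₃ → ¬ G.Adj u w)
    (h1 : ∃ u ∈ C, G.Adj a₁ u) (h2 : ∃ u ∈ C, G.Adj a₂ u) (h3 : ∃ u ∈ C, G.Adj a₃ u) :
    ∃ S : Set V, S ⊆ C ∪ {w | ∃ u ∈ C, G.Adj u w} ∧
      a₁ ∈ S ∧ a₂ ∈ S ∧ a₃ ∈ S ∧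
      IsSTMwithExtremities (G.induce S)
        {v : S | (v : V) = a₁ ∨ (v : V) = a₂ ∨ (v : V) = a₃} := by
  exact STMProof.mainGoal G a₁ a₂ a₃ hne12 hne13 hne23 hind12 hind13 hind23 C hCI
    hCconn h1 h2 h3
end

section
/- If H is a pyramid, then H contains K_{2,3} as an induced minor. -/
open SimpleGraph

universe u v

namespace PyrAux

variable {V : Type u} {G : SimpleGraph V}

lemma conn_supp {u v : V} (p : G.Walk u v) :
    (G.induce {w | w ∈ p.support}).Connected := by
  rw [connected_induce_iff]
  exact p.toSubgraph_connected.mono p.toSubgraph_le_induce_support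
    (by rw [Walk.verts_toSubgraph]; simp)

lemma mem_tail_support_iff {u v x : V} {p : G.Walk u v}
    (hp : p.IsPath) (hn : ¬ p.Nil) : x ∈ p.tail.support ↔ x ∈ p.support ∧ x ≠ u := by
  rw [Walk.support_tail_of_not_nil _ hn]
  have hc := p.support_eq_cons
  have hnd := hp.support_nodup
  rw [hc, List.nodup_cons] at hnd
  constructor
  · intro hx
    refine ⟨by rw [hc]; exact List.mem_cons_of_mem _ hx, ?_⟩
    rintro rfl; exact hnd.1 hx
  · rintro ⟨hx, hne⟩
    rw [hc, List.mem_cons] at hx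
    tauto

lemma length_eq_one_of_edge {u v : V} {p : G.Walk u v} (hp : p.IsPath)
    (he : s(u, v) ∈ p.edges) : p.length = 1 := by
  induction p with
  | nil => simp at he
  | @cons u w v h q ih =>
    rw [Walk.edges_cons, List.mem_cons] at he
    rw [Walk.cons_isPath_iff] at hp
    rcases he with he | he
    · rw [Sym2.eq_iff] at he
      rcases he with ⟨-, rfl⟩ | ⟨rfl, rfl⟩
      · have : q = Walk.nil := Walk.isPath_iff_eq_nil.mp hp.1
        subst this; simp
      · exact absurd rfl h.ne
    · exact absurd (q.fst_mem_support_of_mem_edges he) hp.2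

lemma path_ne_of_one_le {u v : V} {p : G.Walk u v} (hp : p.IsPath)
    (hl : 1 ≤ p.length) : v ≠ u := by
  rintro rfl
  have : p = Walk.nil := Walk.isPath_iff_eq_nil.mp hp
  subst this; simp at hl

lemma key {V : Type u} {H : SimpleGraph V} {a b₁ b₂ b₃ : V}
    (P₁ : H.Walk a b₁) (P₂ : H.Walk a b₂) (P₃ : H.Walk a b₃)
    (h₁ : P₁.IsPath) (h₂ : P₂.IsPath) (h₃ : P₃.IsPath)
    (l₁ : 1 ≤ P₁.length) (l₂ : 2 ≤ P₂.length) (l₃ : 2 ≤ P₃.length)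
    (i₁₂ : ∀ x, x ∈ P₁.support → x ∈ P₂.support → x = a)
    (i₁₃ : ∀ x, x ∈ P₁.support → x ∈ P₃.support → x = a)
    (i₂₃ : ∀ x, x ∈ P₂.support → x ∈ P₃.support → x = a)
    (hadj : ∀ x y, H.Adj x y ↔ (s(x, y) ∈ P₁.edges ∨ s(x, y) ∈ P₂.edges ∨ s(x, y) ∈ P₃.edges ∨
      s(x, y) = s(b₁, b₂) ∨ s(x, y) = s(b₂, b₃) ∨ s(x, y) = s(b₁, b₃))) :
    HasInducedMinor K23 H := by
  have hn₁ : ¬ P₁.Nil := Walk.not_nil_iff_lt_length.mpr (by omega)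
  have hn₂ : ¬ P₂.Nil := Walk.not_nil_iff_lt_length.mpr (by omega)
  have hn₃ : ¬ P₃.Nil := Walk.not_nil_iff_lt_length.mpr (by omega)
  have hb₁a : b₁ ≠ a := path_ne_of_one_le h₁ l₁
  have hb₂a : b₂ ≠ a := path_ne_of_one_le h₂ (by omega)
  have hb₃a : b₃ ≠ a := path_ne_of_one_le h₃ (by omega)
  have hAdj23 : H.Adj b₂ b₃ := (hadj _ _).mpr (by tauto)
  have hAdj12 : H.Adj b₁ b₂ := (hadj _ _).mpr (by tauto)
  have hAdj13 : H.Adj b₁ b₃ := (hadj _ _).mpr (by tauto)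
  -- tails
  have hT₂p : P₂.tail.IsPath := h₂.tail
  have hT₂n : ¬ P₂.tail.Nil := by
    rw [Walk.not_nil_iff_lt_length]
    have := Walk.length_tail_add_one hn₂; omega
  have hR₂p : P₂.tail.reverse.IsPath := hT₂p.reverse
  have hR₂n : ¬ P₂.tail.reverse.Nil := by
    rw [Walk.not_nil_iff_lt_length, Walk.length_reverse]
    have := Walk.length_tail_add_one hn₂; omega
  have hT₃p : P₃.tail.IsPath := h₃.tail
  have hT₃n : ¬ P₃.tail.Nil := by
    rw [Walk.not_nil_iff_lt_length]
    have := Walk.length_tail_add_one hn₃; omega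
  have hR₃p : P₃.tail.reverse.IsPath := hT₃p.reverse
  have hR₃n : ¬ P₃.tail.reverse.Nil := by
    rw [Walk.not_nil_iff_lt_length, Walk.length_reverse]
    have := Walk.length_tail_add_one hn₃; omega
  set A : Set V := {z | z ∈ (Walk.nil : H.Walk a a).support} with hA
  set B : Set V := {z | z ∈ (Walk.cons hAdj23 Walk.nil).support} with hB
  set I₁ : Set V := {z | z ∈ P₁.tail.support} with hI₁
  set I₂ : Set V := {z | z ∈ P₂.tail.reverse.tail.support} with hI₂
  set I₃ : Set V := {z | z ∈ P₃.tail.reverse.tail.support} with hI₃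
  have mA : ∀ z, z ∈ A ↔ z = a := by intro z; rw [hA]; simp
  have mB : ∀ z, z ∈ B ↔ z = b₂ ∨ z = b₃ := by intro z; rw [hB]; simp
  have mI₁ : ∀ z, z ∈ I₁ ↔ z ∈ P₁.support ∧ z ≠ a := by
    intro z; rw [hI₁]; exact mem_tail_support_iff h₁ hn₁
  have mI₂ : ∀ z, z ∈ I₂ ↔ z ∈ P₂.support ∧ z ≠ a ∧ z ≠ b₂ := by
    intro z; rw [hI₂]
    show z ∈ P₂.tail.reverse.tail.support ↔ _
    rw [mem_tail_support_iff hR₂p hR₂n, Walk.support_reverse, List.mem_reverse,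
      mem_tail_support_iff h₂ hn₂]
    tauto
  have mI₃ : ∀ z, z ∈ I₃ ↔ z ∈ P₃.support ∧ z ≠ a ∧ z ≠ b₃ := by
    intro z; rw [hI₃]
    show z ∈ P₃.tail.reverse.tail.support ↔ _
    rw [mem_tail_support_iff hR₃p hR₃n, Walk.support_reverse, List.mem_reverse,
      mem_tail_support_iff h₃ hn₃]
    tauto
  -- disjointness
  have dAB : Disjoint A B := by
    rw [Set.disjoint_left]; intro z hz hz'
    rw [mA] at hz; subst hz
    rw [mB] at hz'
    rcases hz' with h | h
    · exact hb₂a h.symm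
    · exact hb₃a h.symm
  have dA1 : Disjoint A I₁ := by
    rw [Set.disjoint_left]; intro z hz hz'
    rw [mA] at hz; rw [mI₁] at hz'; exact hz'.2 hz
  have dA2 : Disjoint A I₂ := by
    rw [Set.disjoint_left]; intro z hz hz'
    rw [mA] at hz; rw [mI₂] at hz'; exact hz'.2.1 hz
  have dA3 : Disjoint A I₃ := by
    rw [Set.disjoint_left]; intro z hz hz'
    rw [mA] at hz; rw [mI₃] at hz'; exact hz'.2.1 hz
  have dB1 : Disjoint B I₁ := by
    rw [Set.disjoint_left]; intro z hz hz'
    rw [mB] at hz; rw [mI₁] at hz'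
    rcases hz with h | h
    · exact hz'.2 (i₁₂ _ hz'.1 (by rw [h]; exact Walk.end_mem_support _))
    · exact hz'.2 (i₁₃ _ hz'.1 (by rw [h]; exact Walk.end_mem_support _))
  have dB2 : Disjoint B I₂ := by
    rw [Set.disjoint_left]; intro z hz hz'
    rw [mB] at hz; rw [mI₂] at hz'
    rcases hz with h | h
    · exact hz'.2.2 h
    · exact hz'.2.1 (i₂₃ _ hz'.1 (by rw [h]; exact Walk.end_mem_support _))
  have dB3 : Disjoint B I₃ := by
    rw [Set.disjoint_left]; intro z hz hz'
    rw [mB] at hz; rw [mI₃] at hz'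
    rcases hz with h | h
    · exact hz'.2.1 (i₂₃ _ (by rw [h]; exact Walk.end_mem_support _) hz'.1)
    · exact hz'.2.2 h
  have d12 : Disjoint I₁ I₂ := by
    rw [Set.disjoint_left]; intro z hz hz'
    rw [mI₁] at hz; rw [mI₂] at hz'
    exact hz.2 (i₁₂ _ hz.1 hz'.1)
  have d13 : Disjoint I₁ I₃ := by
    rw [Set.disjoint_left]; intro z hz hz'
    rw [mI₁] at hz; rw [mI₃] at hz'
    exact hz.2 (i₁₃ _ hz.1 hz'.1)
  have d23 : Disjoint I₂ I₃ := by
    rw [Set.disjoint_left]; intro z hz hz'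
    rw [mI₂] at hz; rw [mI₃] at hz'
    exact hz.2.1 (i₂₃ _ hz.1 hz'.1)
  -- positive adjacency
  have pA1 : ∃ x ∈ A, ∃ y ∈ I₁, H.Adj x y :=
    ⟨a, (mA a).mpr rfl, P₁.getVert 1, Walk.start_mem_support _,
      Walk.adj_snd hn₁⟩
  have pA2 : ∃ x ∈ A, ∃ y ∈ I₂, H.Adj x y :=
    ⟨a, (mA a).mpr rfl, P₂.getVert 1, Walk.end_mem_support _,
      Walk.adj_snd hn₂⟩
  have pA3 : ∃ x ∈ A, ∃ y ∈ I₃, H.Adj x y :=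
    ⟨a, (mA a).mpr rfl, P₃.getVert 1, Walk.end_mem_support _,
      Walk.adj_snd hn₃⟩
  have pB1 : ∃ x ∈ B, ∃ y ∈ I₁, H.Adj x y :=
    ⟨b₂, (mB b₂).mpr (Or.inl rfl), b₁, (mI₁ b₁).mpr ⟨Walk.end_mem_support _, hb₁a⟩,
      hAdj12.symm⟩
  have pB2 : ∃ x ∈ B, ∃ y ∈ I₂, H.Adj x y :=
    ⟨b₂, (mB b₂).mpr (Or.inl rfl), P₂.tail.reverse.getVert 1, Walk.start_mem_support _,
      Walk.adj_snd hR₂n⟩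
  have pB3 : ∃ x ∈ B, ∃ y ∈ I₃, H.Adj x y :=
    ⟨b₃, (mB b₃).mpr (Or.inr rfl), P₃.tail.reverse.getVert 1, Walk.start_mem_support _,
      Walk.adj_snd hR₃n⟩
  -- negative adjacency
  have eAB : ¬ ∃ x ∈ A, ∃ y ∈ B, H.Adj x y := by
    rintro ⟨x, hx, y, hy, hxy⟩
    rw [mA] at hx; subst hx
    rw [mB] at hy
    have hne := hxy.ne
    rw [hadj] at hxy
    rcases hy with h | h
    · subst h
      rcases hxy with hc | hc | hc | hc | hc | hc
      · exact hb₂a (i₁₂ _ (P₁.snd_mem_support_of_mem_edges hc) (Walk.end_mem_support _))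
      · have := length_eq_one_of_edge h₂ hc; omega
      · exact hb₂a (i₂₃ _ (Walk.end_mem_support _) (P₃.snd_mem_support_of_mem_edges hc))
      · rw [Sym2.eq_iff] at hc
        rcases hc with ⟨hc1, -⟩ | ⟨hc1, -⟩
        · exact hb₁a hc1.symm
        · exact hne hc1
      · rw [Sym2.eq_iff] at hc
        rcases hc with ⟨hc1, -⟩ | ⟨hc1, -⟩
        · exact hne hc1
        · exact hb₃a hc1.symm
      · rw [Sym2.eq_iff] at hc
        rcases hc with ⟨hc1, -⟩ | ⟨hc1, -⟩
        · exact hb₁a hc1.symm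
        · exact hb₃a hc1.symm
    · subst h
      rcases hxy with hc | hc | hc | hc | hc | hc
      · exact hb₃a (i₁₃ _ (P₁.snd_mem_support_of_mem_edges hc) (Walk.end_mem_support _))
      · exact hb₃a (i₂₃ _ (P₂.snd_mem_support_of_mem_edges hc) (Walk.end_mem_support _))
      · have := length_eq_one_of_edge h₃ hc; omega
      · rw [Sym2.eq_iff] at hc
        rcases hc with ⟨hc1, -⟩ | ⟨hc1, -⟩
        · exact hb₁a hc1.symm
        · exact hb₂a hc1.symm
      · rw [Sym2.eq_iff] at hc
        rcases hc with ⟨hc1, -⟩ | ⟨hc1, -⟩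
        · exact hb₂a hc1.symm
        · exact hne hc1
      · rw [Sym2.eq_iff] at hc
        rcases hc with ⟨hc1, -⟩ | ⟨hc1, -⟩
        · exact hb₁a hc1.symm
        · exact hne hc1
  have e12 : ¬ ∃ x ∈ I₁, ∃ y ∈ I₂, H.Adj x y := by
    rintro ⟨x, hx, y, hy, hxy⟩
    rw [mI₁] at hx; rw [mI₂] at hy
    rw [hadj] at hxy
    rcases hxy with hc | hc | hc | hc | hc | hc
    · exact hy.2.1 (i₁₂ _ (P₁.snd_mem_support_of_mem_edges hc) hy.1)
    · exact hx.2 (i₁₂ _ hx.1 (P₂.fst_mem_support_of_mem_edges hc))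
    · exact hx.2 (i₁₃ _ hx.1 (P₃.fst_mem_support_of_mem_edges hc))
    · rw [Sym2.eq_iff] at hc
      rcases hc with ⟨hc1, hc2⟩ | ⟨hc1, hc2⟩
      · exact hy.2.2 hc2
      · exact hx.2 (i₁₂ _ hx.1 (by rw [hc1]; exact Walk.end_mem_support _))
    · rw [Sym2.eq_iff] at hc
      rcases hc with ⟨hc1, hc2⟩ | ⟨hc1, hc2⟩
      · exact hx.2 (i₁₂ _ hx.1 (by rw [hc1]; exact Walk.end_mem_support _))
      · exact hy.2.2 hc2
    · rw [Sym2.eq_iff] at hc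
      rcases hc with ⟨hc1, hc2⟩ | ⟨hc1, hc2⟩
      · exact hy.2.1 (i₂₃ _ hy.1 (by rw [hc2]; exact Walk.end_mem_support _))
      · exact hx.2 (i₁₃ _ hx.1 (by rw [hc1]; exact Walk.end_mem_support _))
  have e13 : ¬ ∃ x ∈ I₁, ∃ y ∈ I₃, H.Adj x y := by
    rintro ⟨x, hx, y, hy, hxy⟩
    rw [mI₁] at hx; rw [mI₃] at hy
    rw [hadj] at hxy
    rcases hxy with hc | hc | hc | hc | hc | hc
    · exact hy.2.1 (i₁₃ _ (P₁.snd_mem_support_of_mem_edges hc) hy.1)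
    · exact hx.2 (i₁₂ _ hx.1 (P₂.fst_mem_support_of_mem_edges hc))
    · exact hx.2 (i₁₃ _ hx.1 (P₃.fst_mem_support_of_mem_edges hc))
    · rw [Sym2.eq_iff] at hc
      rcases hc with ⟨hc1, hc2⟩ | ⟨hc1, hc2⟩
      · exact hy.2.1 (i₂₃ _ (by rw [hc2]; exact Walk.end_mem_support _) hy.1)
      · exact hx.2 (i₁₂ _ hx.1 (by rw [hc1]; exact Walk.end_mem_support _))
    · rw [Sym2.eq_iff] at hc
      rcases hc with ⟨hc1, hc2⟩ | ⟨hc1, hc2⟩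
      · exact hx.2 (i₁₂ _ hx.1 (by rw [hc1]; exact Walk.end_mem_support _))
      · exact hx.2 (i₁₃ _ hx.1 (by rw [hc1]; exact Walk.end_mem_support _))
    · rw [Sym2.eq_iff] at hc
      rcases hc with ⟨hc1, hc2⟩ | ⟨hc1, hc2⟩
      · exact hy.2.2 hc2
      · exact hx.2 (i₁₃ _ hx.1 (by rw [hc1]; exact Walk.end_mem_support _))
  have e23 : ¬ ∃ x ∈ I₂, ∃ y ∈ I₃, H.Adj x y := by
    rintro ⟨x, hx, y, hy, hxy⟩
    rw [mI₂] at hx; rw [mI₃] at hy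
    rw [hadj] at hxy
    rcases hxy with hc | hc | hc | hc | hc | hc
    · exact hx.2.1 (i₁₂ _ (P₁.fst_mem_support_of_mem_edges hc) hx.1)
    · exact hy.2.1 (i₂₃ _ (P₂.snd_mem_support_of_mem_edges hc) hy.1)
    · exact hx.2.1 (i₂₃ _ hx.1 (P₃.fst_mem_support_of_mem_edges hc))
    · rw [Sym2.eq_iff] at hc
      rcases hc with ⟨hc1, hc2⟩ | ⟨hc1, hc2⟩
      · exact hx.2.1 (i₁₂ _ (by rw [hc1]; exact Walk.end_mem_support _) hx.1)
      · exact hx.2.2 hc1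
    · rw [Sym2.eq_iff] at hc
      rcases hc with ⟨hc1, hc2⟩ | ⟨hc1, hc2⟩
      · exact hx.2.2 hc1
      · exact hy.2.1 (i₂₃ _ (by rw [hc2]; exact Walk.end_mem_support _) hy.1)
    · rw [Sym2.eq_iff] at hc
      rcases hc with ⟨hc1, hc2⟩ | ⟨hc1, hc2⟩
      · exact hy.2.2 hc2
      · exact hx.2.1 (i₂₃ _ hx.1 (by rw [hc1]; exact Walk.end_mem_support _))
  have swap : ∀ {S T : Set V}, (∃ x ∈ S, ∃ y ∈ T, H.Adj x y) →
      (∃ x ∈ T, ∃ y ∈ S, H.Adj x y) := by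
    rintro S T ⟨x, hx, y, hy, h⟩; exact ⟨y, hy, x, hx, h.symm⟩
  refine ⟨Sum.elim ![A, B] ![I₁, I₂, I₃], ?_, ?_, ?_, ?_⟩
  · intro w
    rcases w with i | i <;> fin_cases i <;>
      simp only [Sum.elim_inl, Sum.elim_inr, Matrix.cons_val_zero, Matrix.cons_val_one,
        Matrix.head_cons, Matrix.cons_val_two, Matrix.tail_cons] <;>
      exact ⟨_, Walk.start_mem_support _⟩
  · intro w
    rcases w with i | i <;> fin_cases i <;>
      simp only [Sum.elim_inl, Sum.elim_inr, Matrix.cons_val_zero, Matrix.cons_val_one,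
        Matrix.head_cons, Matrix.cons_val_two, Matrix.tail_cons, hA, hB, hI₁, hI₂, hI₃] <;>
      exact conn_supp _
  · intro w w' hne
    rcases w with i | i <;> rcases w' with j | j <;> fin_cases i <;> fin_cases j <;>
      simp only [Sum.elim_inl, Sum.elim_inr, Matrix.cons_val_zero, Matrix.cons_val_one,
        Matrix.head_cons, Matrix.cons_val_two, Matrix.tail_cons] <;>
      first
      | exact absurd rfl hne
      | exact dAB | exact dAB.symm
      | exact dA1 | exact dA1.symm
      | exact dA2 | exact dA2.symm
      | exact dA3 | exact dA3.symm
      | exact dB1 | exact dB1.symm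
      | exact dB2 | exact dB2.symm
      | exact dB3 | exact dB3.symm
      | exact d12 | exact d12.symm
      | exact d13 | exact d13.symm
      | exact d23 | exact d23.symm
  · intro w w' hne
    rcases w with i | i <;> rcases w' with j | j <;> fin_cases i <;> fin_cases j <;>
      simp only [Sum.elim_inl, Sum.elim_inr, Matrix.cons_val_zero, Matrix.cons_val_one,
        Matrix.head_cons, Matrix.cons_val_two, Matrix.tail_cons] <;>
      first
      | exact absurd rfl hne
      | exact iff_of_false eAB (by simp [K23, completeBipartiteGraph])
      | exact iff_of_false (fun h => eAB (swap h)) (by simp [K23, completeBipartiteGraph])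
      | exact iff_of_false e12 (by simp [K23, completeBipartiteGraph])
      | exact iff_of_false (fun h => e12 (swap h)) (by simp [K23, completeBipartiteGraph])
      | exact iff_of_false e13 (by simp [K23, completeBipartiteGraph])
      | exact iff_of_false (fun h => e13 (swap h)) (by simp [K23, completeBipartiteGraph])
      | exact iff_of_false e23 (by simp [K23, completeBipartiteGraph])
      | exact iff_of_false (fun h => e23 (swap h)) (by simp [K23, completeBipartiteGraph])
      | exact iff_of_true pA1 (by simp [K23, completeBipartiteGraph])
      | exact iff_of_true (swap pA1) (by simp [K23, completeBipartiteGraph])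
      | exact iff_of_true pA2 (by simp [K23, completeBipartiteGraph])
      | exact iff_of_true (swap pA2) (by simp [K23, completeBipartiteGraph])
      | exact iff_of_true pA3 (by simp [K23, completeBipartiteGraph])
      | exact iff_of_true (swap pA3) (by simp [K23, completeBipartiteGraph])
      | exact iff_of_true pB1 (by simp [K23, completeBipartiteGraph])
      | exact iff_of_true (swap pB1) (by simp [K23, completeBipartiteGraph])
      | exact iff_of_true pB2 (by simp [K23, completeBipartiteGraph])
      | exact iff_of_true (swap pB2) (by simp [K23, completeBipartiteGraph])
      | exact iff_of_true pB3 (by simp [K23, completeBipartiteGraph])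
      | exact iff_of_true (swap pB3) (by simp [K23, completeBipartiteGraph])

end PyrAux


/-- A pyramid contains `K_{2,3}` as an induced minor. -/
theorem stmt3 {V : Type u} (H : SimpleGraph V) (h : IsPyramid H) :
    HasInducedMinor K23 H := by
  obtain ⟨a, b₁, b₂, b₃, P₁, P₂, P₃, h₁, h₂, h₃, l₁, l₂, l₃, hlong, -, i₁₂, i₁₃, i₂₃, hiff⟩ := h
  rcases hlong with ⟨c1, c2⟩ | ⟨c1, c2⟩ | ⟨c1, c2⟩
  · exact PyrAux.key P₃ P₁ P₂ h₃ h₁ h₂ l₃ c1 c2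
      (fun x hx hy => i₁₃ x hy hx) (fun x hx hy => i₂₃ x hy hx) i₁₂
      (by
        intro x y
        rw [hiff x y]
        simp only [Set.mem_insert_iff, Set.mem_singleton_iff]
        rw [show (s(b₃, b₁) : Sym2 V) = s(b₁, b₃) from Sym2.eq_swap,
          show (s(b₃, b₂) : Sym2 V) = s(b₂, b₃) from Sym2.eq_swap]
        tauto)
  · exact PyrAux.key P₂ P₁ P₃ h₂ h₁ h₃ l₂ c1 c2
      (fun x hx hy => i₁₂ x hy hx) i₂₃ i₁₃
      (by
        intro x y
        rw [hiff x y]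
        simp only [Set.mem_insert_iff, Set.mem_singleton_iff]
        rw [show (s(b₂, b₁) : Sym2 V) = s(b₁, b₂) from Sym2.eq_swap]
        tauto)
  · exact PyrAux.key P₁ P₂ P₃ h₁ h₂ h₃ l₁ c1 c2 i₁₂ i₁₃ i₂₃
      (by
        intro x y
        rw [hiff x y]
        simp only [Set.mem_insert_iff, Set.mem_singleton_iff]
        try tauto)
end

section
/- If W is a broken wheel, then W contains K_{2,3} as an induced minor. -/
open SimpleGraph

universe u v

section Aux
open SimpleGraph Walk
variable {V : Type*} {G : SimpleGraph V}

variable {V : Type*} {G : SimpleGraph V}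

lemma head_edge {a b y : V} (P : G.Walk a b) (hP : P.IsPath)
    (h : s(a,y) ∈ P.edges) : ∃ (h' : G.Adj a y) (P' : G.Walk y b), P = Walk.cons h' P' := by
  cases P with
  | nil => simp at h
  | @cons _ c _ h0 P' =>
    rw [Walk.edges_cons, List.mem_cons] at h
    rcases h with h | h
    · rcases Sym2.eq_iff.mp h with ⟨-, rfl⟩ | ⟨h1, h2⟩
      · exact ⟨h0, P', rfl⟩
      · subst h1; exact absurd rfl h0.ne
    · exact absurd (P'.fst_mem_support_of_mem_edges h)
        ((Walk.cons_isPath_iff _ _ |>.mp hP).2)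

lemma prefix_of_edges_subset {v : V} :
    ∀ {p q : V} (Q : G.Walk p q) (P : G.Walk p v), P.IsPath → Q.IsPath →
    (∀ e ∈ Q.edges, e ∈ P.edges) → ∃ D : G.Walk q v, P = Q.append D := by
  intro p q Q
  induction Q with
  | nil => intro P _ _ _; exact ⟨P, rfl⟩
  | @cons a b c h Q ih =>
    intro P hP hQ hE
    obtain ⟨h', P', rfl⟩ := head_edge P hP (hE s(a,b) (by simp))
    have hQ' : Q.IsPath := (Walk.cons_isPath_iff _ _ |>.mp hQ).1
    have haQ : a ∉ Q.support := (Walk.cons_isPath_iff _ _ |>.mp hQ).2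
    have hE' : ∀ e ∈ Q.edges, e ∈ P'.edges := by
      intro e he
      have := hE e (by simp [he])
      rw [Walk.edges_cons, List.mem_cons] at this
      rcases this with rfl | h2
      · exact absurd (Q.fst_mem_support_of_mem_edges he) haQ
      · exact h2
    obtain ⟨D, rfl⟩ := ih P' (Walk.cons_isPath_iff _ _ |>.mp hP).1 hQ' hE'
    exact ⟨D, rfl⟩


lemma cycle_reverse {p : V} {C : G.Walk p p} (hC : C.IsCycle) : C.reverse.IsCycle := by
  refine ⟨⟨Walk.IsTrail.reverse _ hC.isTrail, fun hn => hC.ne_nil (by simpa using congrArg Walk.reverse hn)⟩, ?_⟩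
  cases C with
  | nil => simp at hC
  | @cons _ z _ h0 T =>
    have htail : T.support.Nodup := by
      have := hC.support_nodup; simpa using this
    have hlast : T.support.getLast (by simp) = p := T.getLast_support
    have hdl : T.support.dropLast ++ [p] = T.support := by
      conv_rhs => rw [← List.dropLast_append_getLast (l := T.support) (by simp)]
      rw [hlast]
    have hnd : (T.support.dropLast ++ [p]).Nodup := by rw [hdl]; exact htail
    have : (Walk.cons h0 T).reverse.support.tail = (p :: T.support.dropLast).reverse := by
      rw [Walk.support_reverse, Walk.support_cons]
      rw [← hdl]
      simp [List.reverse_append]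
    rw [this, List.nodup_reverse]
    rw [List.nodup_append] at hnd
    simp only [List.nodup_cons]
    exact ⟨fun hp => (hnd.2.2 p hp p (by simp) rfl), hnd.1⟩

variable {V : Type*} {G : SimpleGraph V}

lemma cycle_tail_path {p z : V} {h0 : G.Adj p z} {T : G.Walk z p}
    (hC : (Walk.cons h0 T).IsCycle) : T.IsPath := by
  apply Walk.IsPath.mk'
  have := hC.support_nodup
  simpa using this

lemma cycle_cons_of_edge {p y : V} (C : G.Walk p p) (hC : C.IsCycle)
    (h : s(p,y) ∈ C.edges) :
    (∃ (h' : G.Adj p y) (T : G.Walk y p), C = Walk.cons h' T) ∨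
    (∃ (h' : G.Adj p y) (T : G.Walk y p), C.reverse = Walk.cons h' T) := by
  cases C with
  | nil => simp at h
  | @cons _ z _ h0 T =>
    rw [Walk.edges_cons, List.mem_cons] at h
    rcases h with h | h
    · rcases Sym2.eq_iff.mp h with ⟨-, rfl⟩ | ⟨h1, h2⟩
      · exact Or.inl ⟨h0, T, rfl⟩
      · subst h1; exact absurd rfl h0.ne
    · right
      have hT : T.IsPath := cycle_tail_path hC
      have h' : s(p,y) ∈ T.reverse.edges := by
        rw [Walk.edges_reverse, List.mem_reverse]; exact h
      obtain ⟨hadj, R, hR⟩ := head_edge T.reverse hT.reverse h'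
      refine ⟨hadj, R.append (Walk.cons h0.symm Walk.nil), ?_⟩
      rw [Walk.reverse_cons, hR, Walk.cons_append]

lemma cycle_decomp {p q : V} (C : G.Walk p p) (Q : G.Walk p q)
    (hC : C.IsCycle) (hQ : Q.IsPath) (hl : 1 ≤ Q.length)
    (hE : ∀ e ∈ Q.edges, e ∈ C.edges) :
    ∃ (C' : G.Walk p p) (D : G.Walk q p), Q.append D = C' ∧ C'.IsCycle ∧
      (∀ v, v ∈ C'.support ↔ v ∈ C.support) ∧ (∀ e, e ∈ C'.edges ↔ e ∈ C.edges) := by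
  cases Q with
  | nil => simp at hl
  | @cons _ y _ h Q' =>
    have hy : s(p,y) ∈ C.edges := hE _ (by simp)
    have hQ'path : Q'.IsPath := (Walk.cons_isPath_iff _ _ |>.mp hQ).1
    have hpQ' : p ∉ Q'.support := (Walk.cons_isPath_iff _ _ |>.mp hQ).2
    rcases cycle_cons_of_edge C hC hy with ⟨h', T, hT⟩ | ⟨h', T, hT⟩
    · have hTpath : T.IsPath := cycle_tail_path (hT ▸ hC)
      have hE' : ∀ e ∈ Q'.edges, e ∈ T.edges := by
        intro e he
        have := hE e (by simp [he])
        rw [hT, Walk.edges_cons, List.mem_cons] at this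
        rcases this with rfl | h2
        · exact absurd (Q'.fst_mem_support_of_mem_edges he) hpQ'
        · exact h2
      obtain ⟨D, rfl⟩ := prefix_of_edges_subset Q' T hTpath hQ'path hE'
      exact ⟨C, D, by rw [hT, Walk.cons_append], hC, fun _ => Iff.rfl, fun _ => Iff.rfl⟩
    · have hrC : C.reverse.IsCycle := cycle_reverse hC
      have hTpath : T.IsPath := cycle_tail_path (hT ▸ hrC)
      have hE2 : ∀ e ∈ Q'.edges, e ∈ C.reverse.edges := by
        intro e he
        rw [Walk.edges_reverse, List.mem_reverse]; exact hE e (by simp [he])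
      have hE' : ∀ e ∈ Q'.edges, e ∈ T.edges := by
        intro e he
        have := hE2 e he
        rw [hT, Walk.edges_cons, List.mem_cons] at this
        rcases this with rfl | h2
        · exact absurd (Q'.fst_mem_support_of_mem_edges he) hpQ'
        · exact h2
      obtain ⟨D, rfl⟩ := prefix_of_edges_subset Q' T hTpath hQ'path hE'
      refine ⟨C.reverse, D, by rw [hT, Walk.cons_append], hrC, ?_, ?_⟩
      · intro v; rw [Walk.support_reverse, List.mem_reverse]
      · intro e; rw [Walk.edges_reverse, List.mem_reverse]

lemma middle_of_edges_subset {p q : V} (Q : G.Walk p q) (hQ : Q.IsPath) (hl : 1 ≤ Q.length) :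
    ∀ {u v : V} (P : G.Walk u v), P.IsPath →
      (∀ e ∈ Q.edges, e ∈ P.edges) →
      (∃ (E₁ : G.Walk u p) (E₂ : G.Walk q v), P = E₁.append (Q.append E₂)) ∨
      (∃ (E₁ : G.Walk u q) (E₂ : G.Walk p v), P = E₁.append (Q.reverse.append E₂)) := by
  classical
  have hQne : Q.edges ≠ [] := by
    cases Q with
    | nil => simp at hl
    | cons h Q' => simp
  intro u v P
  induction P with
  | nil =>
    intro _ hE
    exfalso
    rcases List.exists_mem_of_ne_nil _ hQne with ⟨e, he⟩
    simpa using hE e he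
  | @cons u w₁ v h P' ih =>
    intro hP hE
    have hP' : P'.IsPath := (Walk.cons_isPath_iff _ _ |>.mp hP).1
    have huP' : u ∉ P'.support := (Walk.cons_isPath_iff _ _ |>.mp hP).2
    by_cases hu : u ∈ Q.support
    · by_cases hup : u = p
      · subst hup
        obtain ⟨E₂, hE₂⟩ := prefix_of_edges_subset Q (Walk.cons h P') hP hQ hE
        exact Or.inl ⟨Walk.nil, E₂, by rw [hE₂, Walk.nil_append]⟩
      · by_cases huq : u = q
        · subst huq
          obtain ⟨E₂, hE₂⟩ := prefix_of_edges_subset Q.reverse (Walk.cons h P') hP hQ.reverse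
            (fun e he => hE e (by rwa [Walk.edges_reverse, List.mem_reverse] at he))
          exact Or.inr ⟨Walk.nil, E₂, by rw [hE₂, Walk.nil_append]⟩
        · exfalso
          set tk := Q.takeUntil u hu with htk
          set dr := Q.dropUntil u hu with hdr
          have htkne : ¬ tk.Nil := Walk.not_nil_of_ne (fun hh => hup hh.symm)
          have hdrne : ¬ dr.Nil := Walk.not_nil_of_ne huq
          have htkrne : ¬ tk.reverse.Nil := by
            rw [Walk.nil_iff_length_eq, Walk.length_reverse, ← Walk.nil_iff_length_eq]
            exact htkne
          obtain ⟨w, h1, R1, hR1⟩ := Walk.not_nil_iff.mp htkrne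
          obtain ⟨w', h2, R2, hR2⟩ := Walk.not_nil_iff.mp hdrne
          have he1 : s(u, w) ∈ Q.edges := by
            apply Q.edges_takeUntil_subset hu
            have : s(u, w) ∈ tk.reverse.edges := by rw [hR1]; simp
            rwa [Walk.edges_reverse, List.mem_reverse] at this
          have he2 : s(u, w') ∈ Q.edges := by
            apply Q.edges_dropUntil_subset hu
            rw [← hdr, hR2]; simp
          have key : ∀ z : V, s(u, z) ∈ Q.edges → z = w₁ := by
            intro z hz
            have := hE _ hz
            rw [Walk.edges_cons, List.mem_cons] at this
            rcases this with heq | hmem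
            · rcases Sym2.eq_iff.mp heq with ⟨-, rfl⟩ | ⟨h3, h4⟩
              · rfl
              · exact absurd h3.symm (G.ne_of_adj (G.adj_symm h))  -- u = w₁?? fix
            · exact absurd (P'.fst_mem_support_of_mem_edges hmem) huP'
          have hw : w = w₁ := key w he1
          have hw' : w' = w₁ := key w' he2
          have hsplit : Q.edges = tk.edges ++ dr.edges := by
            conv_lhs => rw [← Q.take_spec hu]
            rw [Walk.edges_append]
          have hnd : Q.edges.Nodup := hQ.isTrail.edges_nodup
          rw [hsplit, List.nodup_append] at hnd
          have m1 : s(u, w) ∈ tk.edges := by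
            have : s(u, w) ∈ tk.reverse.edges := by rw [hR1]; simp
            rwa [Walk.edges_reverse, List.mem_reverse] at this
          have m2 : s(u, w') ∈ dr.edges := by rw [hR2]; simp
          rw [hw] at m1
          rw [hw'] at m2
          exact hnd.2.2 _ m1 _ m2 rfl
    · have hE' : ∀ e ∈ Q.edges, e ∈ P'.edges := by
        intro e he
        have := hE e he
        rw [Walk.edges_cons, List.mem_cons] at this
        rcases this with rfl | h2
        · exact absurd (Q.fst_mem_support_of_mem_edges he) hu
        · exact h2
      rcases ih hP' hE' with ⟨E₁, E₂, hPd⟩ | ⟨E₁, E₂, hPd⟩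
      · exact Or.inl ⟨Walk.cons h E₁, E₂, by rw [hPd, Walk.cons_append]⟩
      · exact Or.inr ⟨Walk.cons h E₁, E₂, by rw [hPd, Walk.cons_append]⟩

lemma reachable_induce_of_walk {s : Set V} :
    ∀ {a b : V} (w : G.Walk a b) (hw : ∀ z ∈ w.support, z ∈ s),
      (G.induce s).Reachable ⟨a, hw a w.start_mem_support⟩ ⟨b, hw b w.end_mem_support⟩ := by
  intro a b w
  induction w with
  | nil => intro hw; exact Reachable.refl _
  | @cons a c b h w' ih =>
    intro hw
    have hw' : ∀ z ∈ w'.support, z ∈ s := fun z hz => hw z (by simp [hz])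
    refine Reachable.trans ?_ (ih hw')
    exact Adj.reachable (by simpa using h)

lemma connected_induce_of_walk {a b : V} (w : G.Walk a b) :
    (G.induce {v | v ∈ w.support}).Connected := by
  classical
  rw [connected_iff]
  refine ⟨?_, ⟨⟨a, w.start_mem_support⟩⟩⟩
  rintro ⟨u, hu⟩ ⟨v, hv⟩
  have hu' : u ∈ w.support := hu
  have hv' : v ∈ w.support := hv
  let w2 := (w.takeUntil u hu').reverse.append (w.takeUntil v hv')
  have hsub : ∀ z ∈ w2.support, z ∈ {v | v ∈ w.support} := by
    intro z hz
    rw [Walk.mem_support_append_iff] at hz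
    rcases hz with hz | hz
    · rw [Walk.support_reverse, List.mem_reverse] at hz
      exact w.support_takeUntil_subset hu' hz
    · exact w.support_takeUntil_subset hv' hz
  exact reachable_induce_of_walk w2 hsub

lemma connected_induce_singleton (x : V) : (G.induce {x}).Connected := by
  rw [connected_iff]
  refine ⟨?_, ⟨⟨x, rfl⟩⟩⟩
  rintro ⟨u, hu⟩ ⟨v, hv⟩
  have : u = v := by
    have h1 : u = x := hu
    have h2 : v = x := hv
    rw [h1, h2]
  subst this
  exact Reachable.refl _

lemma end_mem_tail {a b : V} (P : G.Walk a b) (h : 1 ≤ P.length) : b ∈ P.support.tail := by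
  cases P with
  | nil => simp at h
  | cons h0 P' => simpa using P'.end_mem_support

lemma no_end_edge {a b : V} (P : G.Walk a b) (hP : P.IsPath) (hl : 2 ≤ P.length) :
    s(a, b) ∉ P.edges := by
  intro hmem
  obtain ⟨h', P', rfl⟩ := head_edge P hP hmem
  have hP' : P'.IsPath := (Walk.cons_isPath_iff _ _ |>.mp hP).1
  have : P'.Nil := by
    by_contra hn
    rw [Walk.nil_iff_length_eq] at hn
    have := end_mem_tail P' (by omega)
    have hnd := hP'.support_nodup
    rw [P'.support_eq_cons] at hnd
    exact (List.nodup_cons.mp hnd).1 this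
  rw [Walk.nil_iff_length_eq] at this
  have hlen : (Walk.cons h' P').length = P'.length + 1 := by simp
  omega

lemma interior_walk {a b : V} (P : G.Walk a b) (hP : P.IsPath) (hl : 2 ≤ P.length) :
    ∃ (y z : V) (M : G.Walk y z), G.Adj a y ∧ G.Adj z b ∧
      (∀ v, v ∈ M.support ↔ (v ∈ P.support ∧ v ≠ a ∧ v ≠ b)) := by
  cases P with
  | nil => simp at hl
  | @cons _ y _ h M₀ =>
    have hM₀ne : ¬ M₀.Nil := by
      rw [Walk.nil_iff_length_eq]
      have : (Walk.cons h M₀).length = M₀.length + 1 := by simp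
      omega
    have hMrne : ¬ M₀.reverse.Nil := by
      rw [Walk.nil_iff_length_eq, Walk.length_reverse, ← Walk.nil_iff_length_eq]
      exact hM₀ne
    obtain ⟨z, h', M₁, hM₁⟩ := Walk.not_nil_iff.mp hMrne
    refine ⟨y, z, M₁.reverse, h, h'.symm, ?_⟩
    have hsupp : M₀.support = M₁.reverse.support ++ [b] := by
      have : M₀.support = M₀.reverse.support.reverse := by
        rw [Walk.support_reverse, List.reverse_reverse]
      rw [this, hM₁, Walk.support_cons, Walk.support_reverse, List.reverse_cons]
    have hnd := hP.support_nodup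
    rw [Walk.support_cons, hsupp] at hnd
    have hand : a ∉ M₁.reverse.support ++ [b] := (List.nodup_cons.mp hnd).1
    have hnd2 : (M₁.reverse.support ++ [b]).Nodup := (List.nodup_cons.mp hnd).2
    have hbnm : b ∉ M₁.reverse.support := by
      intro hb
      rcases List.nodup_append.mp hnd2 with ⟨-, -, hdisj⟩
      exact hdisj b hb b (by simp) rfl
    intro v
    constructor
    · intro hv
      have hv1 : v ∈ (Walk.cons h M₀).support := by
        rw [Walk.support_cons, hsupp]
        exact List.mem_cons_of_mem _ (List.mem_append_left _ hv)
      refine ⟨hv1, ?_, ?_⟩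
      · rintro rfl; exact hand (List.mem_append_left _ hv)
      · rintro rfl; exact hbnm hv
    · rintro ⟨hv, hva, hvb⟩
      rw [Walk.support_cons, hsupp, List.mem_cons] at hv
      rcases hv with hv | hv
      · exact absurd hv hva
      · rcases List.mem_append.mp hv with hv | hv
        · exact hv
        · rw [List.mem_singleton] at hv; exact absurd hv hvb

lemma mem_support_closed {u : V} (c : G.Walk u u) (hc : ¬ c.Nil) (v : V) :
    v ∈ c.support ↔ v ∈ c.support.tail := by
  cases c with
  | nil => simp at hc
  | cons h T =>
    rw [Walk.support_cons]
    simp only [List.tail_cons, List.mem_cons]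
    constructor
    · rintro (rfl | hv)
      · exact T.end_mem_support
      · exact hv
    · exact Or.inr

lemma main_model {x p₁ q₁ p₂ q₂ : V}
    (Q₁ : G.Walk p₁ q₁) (E₁ : G.Walk q₁ p₂) (Q₂ : G.Walk p₂ q₂) (E₂ : G.Walk q₂ p₁)
    (hcyc : (Q₁.append (E₁.append (Q₂.append E₂))).IsCycle)
    (hxs : x ∉ (Q₁.append (E₁.append (Q₂.append E₂))).support)
    (chord : ∀ y z : V, y ∈ (Q₁.append (E₁.append (Q₂.append E₂))).support →
      z ∈ (Q₁.append (E₁.append (Q₂.append E₂))).support →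
      (G.Adj y z ↔ s(y, z) ∈ (Q₁.append (E₁.append (Q₂.append E₂))).edges))
    (hQ₁ : Q₁.IsPath) (hQ₂ : Q₂.IsPath) (l₁ : 2 ≤ Q₁.length) (l₂ : 2 ≤ Q₂.length)
    (axp₁ : G.Adj x p₁) (axq₁ : G.Adj x q₁) (axp₂ : G.Adj x p₂) (axq₂ : G.Adj x q₂)
    (sec₁ : ∀ u ∈ Q₁.support, u ≠ p₁ → u ≠ q₁ → ¬ G.Adj x u)
    (sec₂ : ∀ u ∈ Q₂.support, u ≠ p₂ → u ≠ q₂ → ¬ G.Adj x u) :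
    HasInducedMinor K23 G := by
  obtain ⟨y₁, z₁, M1, hady₁, hadz₁, hM1⟩ := interior_walk Q₁ hQ₁ l₁
  obtain ⟨y₂, z₂, M2, hady₂, hadz₂, hM2⟩ := interior_walk Q₂ hQ₂ l₂
  have hmem : ∀ v, v ∈ (Q₁.append (E₁.append (Q₂.append E₂))).support ↔
      v ∈ Q₁.support ∨ v ∈ E₁.support ∨ v ∈ Q₂.support ∨ v ∈ E₂.support := by
    intro v; simp [Walk.mem_support_append_iff]
  have hedge : ∀ e, e ∈ (Q₁.append (E₁.append (Q₂.append E₂))).edges ↔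
      e ∈ Q₁.edges ∨ e ∈ E₁.edges ∨ e ∈ Q₂.edges ∨ e ∈ E₂.edges := by
    intro e; simp [Walk.edges_append]
  have hN : (Q₁.support.tail ++ (E₁.support.tail ++ (Q₂.support.tail ++
      E₂.support.tail))).Nodup := by
    have h := hcyc.support_nodup
    rwa [Walk.tail_support_append, Walk.tail_support_append,
      Walk.tail_support_append] at h
  obtain ⟨-, hrest, d1⟩ := List.nodup_append.mp hN
  obtain ⟨-, hrest2, d2⟩ := List.nodup_append.mp hrest
  obtain ⟨-, -, d3⟩ := List.nodup_append.mp hrest2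
  have d_s1_t1 : ∀ a, a ∈ Q₁.support.tail → a ∉ E₁.support.tail :=
    fun a ha hb => d1 a ha a (by simp [hb]) rfl
  have d_s1_s2 : ∀ a, a ∈ Q₁.support.tail → a ∉ Q₂.support.tail :=
    fun a ha hb => d1 a ha a (by simp [hb]) rfl
  have d_s1_t2 : ∀ a, a ∈ Q₁.support.tail → a ∉ E₂.support.tail :=
    fun a ha hb => d1 a ha a (by simp [hb]) rfl
  have d_t1_s2 : ∀ a, a ∈ E₁.support.tail → a ∉ Q₂.support.tail :=
    fun a ha hb => d2 a ha a (by simp [hb]) rfl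
  have d_t1_t2 : ∀ a, a ∈ E₁.support.tail → a ∉ E₂.support.tail :=
    fun a ha hb => d2 a ha a (by simp [hb]) rfl
  have d_s2_t2 : ∀ a, a ∈ Q₂.support.tail → a ∉ E₂.support.tail :=
    fun a ha hb => d3 a ha a hb rfl
  have hq₁t : q₁ ∈ Q₁.support.tail := end_mem_tail Q₁ (by omega)
  have hq₂t : q₂ ∈ Q₂.support.tail := end_mem_tail Q₂ (by omega)
  have hp₁nt : p₁ ∉ Q₁.support.tail := by
    have h := hQ₁.support_nodup
    rw [Q₁.support_eq_cons] at h
    exact (List.nodup_cons.mp h).1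
  have hp₂nt : p₂ ∉ Q₂.support.tail := by
    have h := hQ₂.support_nodup
    rw [Q₂.support_eq_cons] at h
    exact (List.nodup_cons.mp h).1
  have hsQ₁ : ∀ v, v ∈ Q₁.support ↔ v = p₁ ∨ v ∈ Q₁.support.tail := by
    intro v; conv_lhs => rw [Q₁.support_eq_cons]
    exact List.mem_cons
  have hsQ₂ : ∀ v, v ∈ Q₂.support ↔ v = p₂ ∨ v ∈ Q₂.support.tail := by
    intro v; conv_lhs => rw [Q₂.support_eq_cons]
    exact List.mem_cons
  have hsE₁ : ∀ v, v ∈ E₁.support ↔ v = q₁ ∨ v ∈ E₁.support.tail := by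
    intro v; conv_lhs => rw [E₁.support_eq_cons]
    exact List.mem_cons
  have hsE₂ : ∀ v, v ∈ E₂.support ↔ v = q₂ ∨ v ∈ E₂.support.tail := by
    intro v; conv_lhs => rw [E₂.support_eq_cons]
    exact List.mem_cons
  have hq₁A : q₁ ∈ E₁.support := E₁.start_mem_support
  have hp₂A : p₂ ∈ E₁.support := E₁.end_mem_support
  have hq₂B : q₂ ∈ E₂.support := E₂.start_mem_support
  have hp₁B : p₁ ∈ E₂.support := E₂.end_mem_support
  have hq₁q₂ : q₁ ≠ q₂ := fun h => d_s1_s2 q₁ hq₁t (h ▸ hq₂t)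
  have hp₁nt1 : p₁ ∉ E₁.support.tail := by
    intro hc
    rcases (hsE₂ p₁).mp hp₁B with h | h
    · exact d_t1_s2 p₁ hc (h ▸ hq₂t)
    · exact d_t1_t2 p₁ hc h
  have hp₂nt2 : p₂ ∉ E₂.support.tail := by
    intro hc
    rcases (hsE₁ p₂).mp hp₂A with h | h
    · exact d_s1_t2 p₂ (h ▸ hq₁t) hc
    · exact d_t1_t2 p₂ h hc
  have hxQ₁ : x ∉ Q₁.support := fun h => hxs ((hmem x).mpr (Or.inl h))
  have hxE₁ : x ∉ E₁.support := fun h => hxs ((hmem x).mpr (Or.inr (Or.inl h)))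
  have hxQ₂ : x ∉ Q₂.support := fun h => hxs ((hmem x).mpr (Or.inr (Or.inr (Or.inl h))))
  have hxE₂ : x ∉ E₂.support := fun h => hxs ((hmem x).mpr (Or.inr (Or.inr (Or.inr h))))
  have hI₁s1 : ∀ v ∈ M1.support, v ∈ Q₁.support.tail := by
    intro v hv
    obtain ⟨hvQ, hvp, -⟩ := (hM1 v).mp hv
    rcases (hsQ₁ v).mp hvQ with h | h
    · exact absurd h hvp
    · exact h
  have hI₂s2 : ∀ v ∈ M2.support, v ∈ Q₂.support.tail := by
    intro v hv
    obtain ⟨hvQ, hvp, -⟩ := (hM2 v).mp hv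
    rcases (hsQ₂ v).mp hvQ with h | h
    · exact absurd h hvp
    · exact h
  have hI₁x : ∀ v ∈ M1.support, ¬ G.Adj x v := by
    intro v hv
    obtain ⟨hvQ, hvp, hvq⟩ := (hM1 v).mp hv
    exact sec₁ v hvQ hvp hvq
  have hI₂x : ∀ v ∈ M2.support, ¬ G.Adj x v := by
    intro v hv
    obtain ⟨hvQ, hvp, hvq⟩ := (hM2 v).mp hv
    exact sec₂ v hvQ hvp hvq
  -- pairwise set intersections are empty
  have dAB : ∀ v, v ∈ E₁.support → v ∈ E₂.support → False := by
    intro v h1 h2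
    rcases (hsE₁ v).mp h1 with h | h <;> rcases (hsE₂ v).mp h2 with h' | h'
    · exact hq₁q₂ (h ▸ h')
    · exact d_s1_t2 v (h ▸ hq₁t) h'
    · exact d_t1_s2 v h (h' ▸ hq₂t)
    · exact d_t1_t2 v h h'
  have dAI₁ : ∀ v, v ∈ E₁.support → v ∈ M1.support → False := by
    intro v h1 h2
    obtain ⟨-, -, hvq⟩ := (hM1 v).mp h2
    rcases (hsE₁ v).mp h1 with h | h
    · exact hvq h
    · exact d_s1_t1 v (hI₁s1 v h2) h
  have dAI₂ : ∀ v, v ∈ E₁.support → v ∈ M2.support → False := by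
    intro v h1 h2
    rcases (hsE₁ v).mp h1 with h | h
    · exact d_s1_s2 v (h ▸ hq₁t) (hI₂s2 v h2)
    · exact d_t1_s2 v h (hI₂s2 v h2)
  have dBI₁ : ∀ v, v ∈ E₂.support → v ∈ M1.support → False := by
    intro v h1 h2
    rcases (hsE₂ v).mp h1 with h | h
    · exact d_s1_s2 v (hI₁s1 v h2) (h ▸ hq₂t)
    · exact d_s1_t2 v (hI₁s1 v h2) h
  have dBI₂ : ∀ v, v ∈ E₂.support → v ∈ M2.support → False := by
    intro v h1 h2
    obtain ⟨-, -, hvq⟩ := (hM2 v).mp h2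
    rcases (hsE₂ v).mp h1 with h | h
    · exact hvq h
    · exact d_s2_t2 v (hI₂s2 v h2) h
  have dI₁I₂ : ∀ v, v ∈ M1.support → v ∈ M2.support → False := by
    intro v h1 h2
    exact d_s1_s2 v (hI₁s1 v h1) (hI₂s2 v h2)
  have hxM1 : x ∉ M1.support := fun h => hxQ₁ ((hM1 x).mp h).1
  have hxM2 : x ∉ M2.support := fun h => hxQ₂ ((hM2 x).mp h).1
  -- no edges between E₁-part and E₂-part
  have nAB : ∀ u v, u ∈ E₁.support → v ∈ E₂.support → ¬ G.Adj u v := by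
    intro u v hu hv hadj
    have hur := (hmem u).mpr (Or.inr (Or.inl hu))
    have hvr := (hmem v).mpr (Or.inr (Or.inr (Or.inr hv)))
    have he := (hedge _).mp ((chord u v hur hvr).mp hadj)
    rcases he with h1 | h1 | h1 | h1
    · have hu1 : u ∈ Q₁.support := Q₁.fst_mem_support_of_mem_edges h1
      have hv1 : v ∈ Q₁.support := Q₁.snd_mem_support_of_mem_edges h1
      have hu2 : u = q₁ := by
        rcases (hsE₁ u).mp hu with h | h
        · exact h
        · rcases (hsQ₁ u).mp hu1 with h' | h'
          · exact absurd (h' ▸ h) hp₁nt1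
          · exact absurd h (d_s1_t1 u h')
      have hv2 : v = p₁ := by
        rcases (hsQ₁ v).mp hv1 with h' | h'
        · exact h'
        · exfalso
          rcases (hsE₂ v).mp hv with h | h
          · exact d_s1_s2 v h' (h ▸ hq₂t)
          · exact d_s1_t2 v h' h
      subst hu2; subst hv2
      exact no_end_edge Q₁ hQ₁ l₁ (by rwa [Sym2.eq_swap] at h1)
    · have hv1 : v ∈ E₁.support := E₁.snd_mem_support_of_mem_edges h1
      exact dAB v hv1 hv
    · have hu1 : u ∈ Q₂.support := Q₂.fst_mem_support_of_mem_edges h1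
      have hv1 : v ∈ Q₂.support := Q₂.snd_mem_support_of_mem_edges h1
      have hu2 : u = p₂ := by
        rcases (hsQ₂ u).mp hu1 with h' | h'
        · exact h'
        · exfalso
          rcases (hsE₁ u).mp hu with h | h
          · exact d_s1_s2 u (h ▸ hq₁t) h'
          · exact d_t1_s2 u h h'
      have hv2 : v = q₂ := by
        rcases (hsE₂ v).mp hv with h | h
        · exact h
        · rcases (hsQ₂ v).mp hv1 with h' | h'
          · exact absurd (h' ▸ h) hp₂nt2
          · exact absurd h (d_s2_t2 v h')
      subst hu2; subst hv2
      exact no_end_edge Q₂ hQ₂ l₂ h1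
    · have hu1 : u ∈ E₂.support := E₂.fst_mem_support_of_mem_edges h1
      exact dAB u hu hu1
  -- no edges between the two interiors
  have nI12 : ∀ u v, u ∈ M1.support → v ∈ M2.support → ¬ G.Adj u v := by
    intro u v hu hv hadj
    obtain ⟨huQ, hup, huq⟩ := (hM1 u).mp hu
    obtain ⟨hvQ, hvp, hvq⟩ := (hM2 v).mp hv
    have hus1 := hI₁s1 u hu
    have hvs2 := hI₂s2 v hv
    have hnxu : ¬ G.Adj x u := sec₁ u huQ hup huq
    have hnxv : ¬ G.Adj x v := sec₂ v hvQ hvp hvq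
    have hur := (hmem u).mpr (Or.inl huQ)
    have hvr := (hmem v).mpr (Or.inr (Or.inr (Or.inl hvQ)))
    have he := (hedge _).mp ((chord u v hur hvr).mp hadj)
    rcases he with h1 | h1 | h1 | h1
    · have hv1 : v ∈ Q₁.support := Q₁.snd_mem_support_of_mem_edges h1
      rcases (hsQ₁ v).mp hv1 with h | h
      · exact hnxv (h ▸ axp₁)
      · exact d_s1_s2 v h hvs2
    · have hu1 : u ∈ E₁.support := E₁.fst_mem_support_of_mem_edges h1
      rcases (hsE₁ u).mp hu1 with h | h
      · exact huq h
      · exact d_s1_t1 u hus1 h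
    · have hu1 : u ∈ Q₂.support := Q₂.fst_mem_support_of_mem_edges h1
      rcases (hsQ₂ u).mp hu1 with h | h
      · exact hnxu (h ▸ axp₂)
      · exact d_s1_s2 u hus1 h
    · have hu1 : u ∈ E₂.support := E₂.fst_mem_support_of_mem_edges h1
      rcases (hsE₂ u).mp hu1 with h | h
      · exact hnxu (h ▸ axq₂)
      · exact d_s1_t2 u hus1 h
  classical
  refine ⟨fun w => match w with
    | Sum.inl (i : Fin 2) => if i = 0 then {v | v ∈ E₁.support} else {v | v ∈ E₂.support}
    | Sum.inr (j : Fin 3) => if j = 0 then {x} else if j = 1 then {v | v ∈ M1.support}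
        else {v | v ∈ M2.support}, ?_, ?_, ?_, ?_⟩
  · rintro (i | j)
    · fin_cases i
      · exact ⟨q₁, hq₁A⟩
      · exact ⟨p₁, hp₁B⟩
    · fin_cases j
      · exact ⟨x, rfl⟩
      · exact ⟨y₁, M1.start_mem_support⟩
      · exact ⟨y₂, M2.start_mem_support⟩
  · rintro (i | j)
    · fin_cases i
      · exact connected_induce_of_walk E₁
      · exact connected_induce_of_walk E₂
    · fin_cases j
      · exact connected_induce_singleton x
      · exact connected_induce_of_walk M1
      · exact connected_induce_of_walk M2
  · intro w w' hne
    rcases w with i | j <;> rcases w' with i' | j'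
    · fin_cases i <;> fin_cases i'
      · exact absurd rfl hne
      · exact Set.disjoint_left.mpr (fun a ha hb => (dAB a ha hb).elim)
      · exact Set.disjoint_left.mpr (fun a ha hb => (dAB a hb ha).elim)
      · exact absurd rfl hne
    · fin_cases i <;> fin_cases j'
      · exact Set.disjoint_left.mpr (fun a ha hb => hxE₁ (by rwa [hb] at ha))
      · exact Set.disjoint_left.mpr (fun a ha hb => (dAI₁ a ha hb).elim)
      · exact Set.disjoint_left.mpr (fun a ha hb => (dAI₂ a ha hb).elim)
      · exact Set.disjoint_left.mpr (fun a ha hb => hxE₂ (by rwa [hb] at ha))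
      · exact Set.disjoint_left.mpr (fun a ha hb => (dBI₁ a ha hb).elim)
      · exact Set.disjoint_left.mpr (fun a ha hb => (dBI₂ a ha hb).elim)
    · fin_cases j <;> fin_cases i'
      · exact Set.disjoint_left.mpr (fun a ha hb => hxE₁ (by rwa [ha] at hb))
      · exact Set.disjoint_left.mpr (fun a ha hb => hxE₂ (by rwa [ha] at hb))
      · exact Set.disjoint_left.mpr (fun a ha hb => (dAI₁ a hb ha).elim)
      · exact Set.disjoint_left.mpr (fun a ha hb => (dBI₁ a hb ha).elim)
      · exact Set.disjoint_left.mpr (fun a ha hb => (dAI₂ a hb ha).elim)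
      · exact Set.disjoint_left.mpr (fun a ha hb => (dBI₂ a hb ha).elim)
    · fin_cases j <;> fin_cases j'
      · exact absurd rfl hne
      · refine Set.disjoint_left.mpr (fun a ha hb => ?_)
        rw [ha] at hb; exact hxM1 hb
      · refine Set.disjoint_left.mpr (fun a ha hb => ?_)
        rw [ha] at hb; exact hxM2 hb
      · refine Set.disjoint_left.mpr (fun a ha hb => ?_)
        rw [hb] at ha; exact hxM1 ha
      · exact absurd rfl hne
      · exact Set.disjoint_left.mpr (fun a ha hb => (dI₁I₂ a ha hb).elim)
      · refine Set.disjoint_left.mpr (fun a ha hb => ?_)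
        rw [hb] at ha; exact hxM2 ha
      · exact Set.disjoint_left.mpr (fun a ha hb => (dI₁I₂ a hb ha).elim)
      · exact absurd rfl hne
  · intro w w' hne
    rcases w with i | j <;> rcases w' with i' | j'
    · fin_cases i <;> fin_cases i'
      · exact absurd rfl hne
      · constructor
        · rintro ⟨a, ha, b, hb, hab⟩; exact (nAB a b ha hb hab).elim
        · intro h; simp [K23] at h
      · constructor
        · rintro ⟨a, ha, b, hb, hab⟩; exact (nAB b a hb ha hab.symm).elim
        · intro h; simp [K23] at h
      · exact absurd rfl hne
    · fin_cases i <;> fin_cases j'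
      · constructor
        · intro _; simp [K23]
        · intro _; exact ⟨q₁, hq₁A, x, rfl, axq₁.symm⟩
      · constructor
        · intro _; simp [K23]
        · intro _; exact ⟨q₁, hq₁A, z₁, M1.end_mem_support, hadz₁.symm⟩
      · constructor
        · intro _; simp [K23]
        · intro _; exact ⟨p₂, hp₂A, y₂, M2.start_mem_support, hady₂⟩
      · constructor
        · intro _; simp [K23]
        · intro _; exact ⟨p₁, hp₁B, x, rfl, axp₁.symm⟩
      · constructor
        · intro _; simp [K23]
        · intro _; exact ⟨p₁, hp₁B, y₁, M1.start_mem_support, hady₁⟩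
      · constructor
        · intro _; simp [K23]
        · intro _; exact ⟨q₂, hq₂B, z₂, M2.end_mem_support, hadz₂.symm⟩
    · fin_cases j <;> fin_cases i'
      · constructor
        · intro _; simp [K23]
        · intro _; exact ⟨x, rfl, q₁, hq₁A, axq₁⟩
      · constructor
        · intro _; simp [K23]
        · intro _; exact ⟨x, rfl, p₁, hp₁B, axp₁⟩
      · constructor
        · intro _; simp [K23]
        · intro _; exact ⟨z₁, M1.end_mem_support, q₁, hq₁A, hadz₁⟩
      · constructor
        · intro _; simp [K23]
        · intro _; exact ⟨y₁, M1.start_mem_support, p₁, hp₁B, hady₁.symm⟩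
      · constructor
        · intro _; simp [K23]
        · intro _; exact ⟨y₂, M2.start_mem_support, p₂, hp₂A, hady₂.symm⟩
      · constructor
        · intro _; simp [K23]
        · intro _; exact ⟨z₂, M2.end_mem_support, q₂, hq₂B, hadz₂⟩
    · fin_cases j <;> fin_cases j'
      · exact absurd rfl hne
      · constructor
        · rintro ⟨a, ha, b, hb, hab⟩
          rw [show a = x from ha] at hab
          exact (hI₁x b hb hab).elim
        · intro h; simp [K23] at h
      · constructor
        · rintro ⟨a, ha, b, hb, hab⟩
          rw [show a = x from ha] at hab
          exact (hI₂x b hb hab).elim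
        · intro h; simp [K23] at h
      · constructor
        · rintro ⟨a, ha, b, hb, hab⟩
          rw [show b = x from hb] at hab
          exact (hI₁x a ha hab.symm).elim
        · intro h; simp [K23] at h
      · exact absurd rfl hne
      · constructor
        · rintro ⟨a, ha, b, hb, hab⟩; exact (nI12 a b ha hb hab).elim
        · intro h; simp [K23] at h
      · constructor
        · rintro ⟨a, ha, b, hb, hab⟩
          rw [show b = x from hb] at hab
          exact (hI₂x a ha hab.symm).elim
        · intro h; simp [K23] at h
      · constructor
        · rintro ⟨a, ha, b, hb, hab⟩; exact (nI12 b a hb ha hab.symm).elim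
        · intro h; simp [K23] at h
      · exact absurd rfl hne

end Aux
/-- A broken wheel contains `K_{2,3}` as an induced minor. -/
theorem stmt5 {V : Type u} (W : SimpleGraph V) (h : IsBrokenWheel W) :
    HasInducedMinor K23 W := by
  classical
  obtain ⟨x, w, C, ⟨hcyc, hlen4, hxC, hchord, -⟩, -, p₁, q₁, p₂, q₂, Q₁, Q₂,
    ⟨hQ₁path, hQ₁len, hQ₁E, haxp₁, haxq₁, hsec₁⟩,
    ⟨hQ₂path, hQ₂len, hQ₂E, haxp₂, haxq₂, hsec₂⟩, hl₁, hl₂, hdisjE⟩ := h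
  have hQ₁nil : ¬ Q₁.Nil := by rw [Walk.nil_iff_length_eq]; omega
  obtain ⟨y, hy, Q₁', hQ₁'⟩ := Walk.not_nil_iff.mp hQ₁nil
  have hp₁C : p₁ ∈ C.support := by
    apply C.fst_mem_support_of_mem_edges (u := y)
    apply hQ₁E
    rw [hQ₁']; simp
  have hCnil : ¬ C.Nil := hcyc.isCircuit.not_nil
  set C1 := C.rotate p₁ hp₁C with hC1def
  have hC1cyc : C1.IsCycle := hcyc.rotate hp₁C
  have hC1nil : ¬ C1.Nil := hC1cyc.isCircuit.not_nil
  have hsup1 : ∀ v, v ∈ C1.support ↔ v ∈ C.support := by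
    intro v
    rw [mem_support_closed C1 hC1nil, mem_support_closed C hCnil]
    exact (C.support_rotate p₁ hp₁C).mem_iff
  have hedg1 : ∀ e, e ∈ C1.edges ↔ e ∈ C.edges := fun e => (C.rotate_edges p₁ hp₁C).mem_iff
  obtain ⟨C2, D, hQD, hC2cyc, hsup2, hedg2⟩ := cycle_decomp C1 Q₁ hC1cyc hQ₁path
    (by omega) (fun e he => (hedg1 e).mpr (hQ₁E e he))
  have hsupC2 : ∀ v, v ∈ C2.support ↔ v ∈ C.support := fun v => (hsup2 v).trans (hsup1 v)
  have hedgC2 : ∀ e, e ∈ C2.edges ↔ e ∈ C.edges := fun e => (hedg2 e).trans (hedg1 e)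
  have hDpath : D.IsPath := by
    apply Walk.IsPath.mk'
    have hnd := hC2cyc.support_nodup
    rw [← hQD, Walk.tail_support_append] at hnd
    rw [D.support_eq_cons, List.nodup_cons]
    obtain ⟨-, hnd2, hd⟩ := List.nodup_append.mp hnd
    exact ⟨fun hq => hd _ (end_mem_tail Q₁ (by omega)) _ hq rfl, hnd2⟩
  have hQ₂D : ∀ e ∈ Q₂.edges, e ∈ D.edges := by
    intro e he
    have h1 : e ∈ C2.edges := (hedgC2 e).mpr (hQ₂E e he)
    rw [← hQD, Walk.edges_append, List.mem_append] at h1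
    rcases h1 with h1 | h1
    · exact absurd he (hdisjE e h1)
    · exact h1
  rcases middle_of_edges_subset Q₂ hQ₂path (by omega) D hDpath hQ₂D with
    ⟨E₁, E₂, hD⟩ | ⟨E₁, E₂, hD⟩
  · rw [hD] at hQD
    refine main_model Q₁ E₁ Q₂ E₂ ?_ ?_ ?_ hQ₁path hQ₂path hl₁ hl₂ haxp₁ haxq₁ haxp₂ haxq₂
      hsec₁ hsec₂
    · rw [hQD]; exact hC2cyc
    · rw [hQD]; exact fun hx => hxC ((hsupC2 x).mp hx)
    · intro a b ha hb
      rw [hQD] at ha hb ⊢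
      exact (hchord a b ((hsupC2 a).mp ha) ((hsupC2 b).mp hb)).trans
        (hedgC2 s(a, b)).symm
  · rw [hD] at hQD
    refine main_model Q₁ E₁ Q₂.reverse E₂ ?_ ?_ ?_ hQ₁path hQ₂path.reverse
      hl₁ (by simpa using hl₂) haxp₁ haxq₁ haxq₂ haxp₂ hsec₁ ?_
    · rw [hQD]; exact hC2cyc
    · rw [hQD]; exact fun hx => hxC ((hsupC2 x).mp hx)
    · intro a b ha hb
      rw [hQD] at ha hb ⊢
      exact (hchord a b ((hsupC2 a).mp ha) ((hsupC2 b).mp hb)).trans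
        (hedgC2 s(a, b)).symm
    · intro u hu hq hp
      rw [Walk.support_reverse, List.mem_reverse] at hu
      exact hsec₂ u hu hp hq
end
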